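/- arXiv:1402.3239 — 9 statements merged into one kernel-verified Lean document; each statement's English description precedes it below -/
import Mathlib

section
/- For any graph G of order n and any real p ≥ 1, λ^(p)(G) ≤ (2 e(G))^(1 - 1/p), where e(G) is the number of edges of G. -/
open Finset

open scoped Classical

/-- The p-spectral radius of a graph `G`:
`λ^(p)(G) = max { 2 ∑_{{i,j}∈E(G)} x_i x_j : ∑ |x_i|^p = 1 }`,
where the quadratic form is written as `∑ i ∑ j, if G.Adj i j then x i * x j else 0`. -/

noncomputable def pSpec {V : Type*} [Fintype V] (G : SimpleGraph V) (p : ℝ) : ℝ :=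
  sSup {y : ℝ | ∃ x : V → ℝ, (∑ i, |x i| ^ p) = 1 ∧
    y = ∑ i, ∑ j, if G.Adj i j then x i * x j else 0}

theorem stmt1 {n : ℕ} (G : SimpleGraph (Fin n)) [DecidableRel G.Adj] (p : ℝ) (hp : 1 ≤ p) :
    pSpec G p ≤ (2 * (G.edgeFinset.card : ℝ)) ^ (1 - 1 / p) := by
  have hp0 : 0 < p := lt_of_lt_of_le one_pos hp
  apply Real.sSup_le
  · rintro y ⟨x, hx, rfl⟩
    set A : Finset (Fin n × Fin n) := univ.filter (fun e => G.Adj e.1 e.2) with hA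
    have hcard : (A.card : ℝ) = 2 * (G.edgeFinset.card : ℝ) := by
      rw [hA, ← G.two_mul_card_edgeFinset]; push_cast; ring
    set f : Fin n × Fin n → ℝ := fun e => |x e.1| * |x e.2| with hf
    have hfnn : ∀ e, 0 ≤ f e := fun e => mul_nonneg (abs_nonneg _) (abs_nonneg _)
    -- rewrite the double sum as a sum over adjacent ordered pairs
    refine le_trans (le_of_eq (b := ∑ e ∈ A, x e.1 * x e.2) ?_) ?_
    · rw [hA, Finset.sum_filter, ← Finset.sum_product', Finset.univ_product_univ]
      congr!
    have step1 : (∑ e ∈ A, x e.1 * x e.2) ≤ ∑ e ∈ A, f e := by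
      apply Finset.sum_le_sum
      intro e _
      calc x e.1 * x e.2 ≤ |x e.1 * x e.2| := le_abs_self _
        _ = f e := by rw [hf, abs_mul]
    -- Hölder with weight 1
    have step2 : (∑ e ∈ A, f e)
        ≤ (∑ e ∈ A, (1:ℝ)) ^ (1 - p⁻¹) * (∑ e ∈ A, 1 * f e ^ p) ^ p⁻¹ := by
      simpa using Real.inner_le_weight_mul_Lp_of_nonneg A hp (fun _ => (1:ℝ)) f
        (fun _ => zero_le_one) hfnn
    have hsum1 : (∑ e ∈ A, (1:ℝ)) = 2 * (G.edgeFinset.card : ℝ) := by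
      rw [Finset.sum_const, nsmul_eq_mul, mul_one, hcard]
    have hsump : (∑ e ∈ A, (1:ℝ) * f e ^ p) ≤ 1 := by
      have h1 : ∀ e ∈ A, (1:ℝ) * f e ^ p = |x e.1| ^ p * |x e.2| ^ p := by
        intro e _
        rw [one_mul, hf, Real.mul_rpow (abs_nonneg _) (abs_nonneg _)]
      rw [Finset.sum_congr rfl h1]
      calc (∑ e ∈ A, |x e.1| ^ p * |x e.2| ^ p)
          ≤ ∑ e ∈ Finset.univ ×ˢ Finset.univ, |x e.1| ^ p * |x e.2| ^ p := by
            apply Finset.sum_le_sum_of_subset_of_nonneg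
            · rw [hA]; exact Finset.filter_subset _ _
            · intro e _ _
              exact mul_nonneg (Real.rpow_nonneg (abs_nonneg _) _)
                (Real.rpow_nonneg (abs_nonneg _) _)
        _ = (∑ i, |x i| ^ p) * (∑ j, |x j| ^ p) := by
            rw [Finset.sum_mul_sum, ← Finset.sum_product']
        _ = 1 := by rw [hx]; ring
    calc (∑ e ∈ A, x e.1 * x e.2) ≤ ∑ e ∈ A, f e := step1
      _ ≤ (∑ e ∈ A, (1:ℝ)) ^ (1 - p⁻¹) * (∑ e ∈ A, 1 * f e ^ p) ^ p⁻¹ := step2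
      _ ≤ (2 * (G.edgeFinset.card : ℝ)) ^ (1 - 1 / p) * 1 := by
          rw [hsum1, one_div]
          apply mul_le_mul_of_nonneg_left _ (Real.rpow_nonneg (by positivity) _)
          calc (∑ e ∈ A, (1:ℝ) * f e ^ p) ^ p⁻¹ ≤ (1 : ℝ) ^ p⁻¹ := by
                apply Real.rpow_le_rpow _ hsump (by positivity)
                exact Finset.sum_nonneg fun e _ => by
                  rw [one_mul]; exact Real.rpow_nonneg (hfnn e) _
            _ = 1 := Real.one_rpow _
      _ = (2 * (G.edgeFinset.card : ℝ)) ^ (1 - 1 / p) := mul_one _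
  · positivity
end

section
/- For any graph G of order n and real numbers p > q ≥ 1, one has λ^(q)(G) n^(2/q) ≥ λ^(p)(G) n^(2/p); that is, the function p ↦ λ^(p)(G) n^(2/p) is nonincreasing in p. -/
open Finset

open scoped Classical

lemma pSpec_bdd {V : Type*} [Fintype V] (G : SimpleGraph V) {p : ℝ} (hp : 0 < p) :
    BddAbove {y : ℝ | ∃ x : V → ℝ, (∑ i, |x i| ^ p) = 1 ∧
      y = ∑ i, ∑ j, if G.Adj i j then x i * x j else 0} := by
  refine ⟨(Fintype.card V : ℝ) ^ 2, ?_⟩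
  rintro y ⟨x, hx, rfl⟩
  have hxb : ∀ i, |x i| ≤ 1 := by
    intro i
    by_contra h
    push_neg at h
    have h1 : |x i| ^ p ≤ 1 := by
      rw [← hx]
      exact Finset.single_le_sum (fun j _ => Real.rpow_nonneg (abs_nonneg _) p)
        (Finset.mem_univ i)
    have : 1 < |x i| ^ p :=
      (Real.one_lt_rpow_iff_of_pos (lt_trans one_pos h)).2 (Or.inl ⟨h, hp⟩)
    linarith
  calc ∑ i, ∑ j, (if G.Adj i j then x i * x j else 0)
      ≤ ∑ _i : V, ∑ _j : V, (1 : ℝ) := by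
        refine Finset.sum_le_sum fun i _ => Finset.sum_le_sum fun j _ => ?_
        split
        · calc x i * x j ≤ |x i * x j| := le_abs_self _
            _ = |x i| * |x j| := abs_mul _ _
            _ ≤ 1 * 1 := mul_le_mul (hxb i) (hxb j) (abs_nonneg _) zero_le_one
            _ = 1 := one_mul 1
        · exact zero_le_one
    _ = (Fintype.card V : ℝ) ^ 2 := by simp [sq]

lemma pSpec_mem_zero {n : ℕ} (hn : 0 < n) (G : SimpleGraph (Fin n)) {p : ℝ} (hp : 0 < p) :
    (0 : ℝ) ∈ {y : ℝ | ∃ x : Fin n → ℝ, (∑ i, |x i| ^ p) = 1 ∧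
      y = ∑ i, ∑ j, if G.Adj i j then x i * x j else 0} := by
  refine ⟨fun i => if i = ⟨0, hn⟩ then 1 else 0, ?_, ?_⟩
  · have : ∀ i : Fin n, |(if i = (⟨0, hn⟩ : Fin n) then (1:ℝ) else 0)| ^ p
        = if i = ⟨0, hn⟩ then 1 else 0 := by
      intro i
      split <;> simp [Real.zero_rpow hp.ne']
    simp_rw [this]
    simp
  · symm
    refine Finset.sum_eq_zero fun i _ => Finset.sum_eq_zero fun j _ => ?_
    by_cases hadj : G.Adj i j
    · simp only [hadj, if_true]
      by_cases hi : i = ⟨0, hn⟩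
      · by_cases hj : j = ⟨0, hn⟩
        · exact absurd (by rw [hi, hj] at hadj; exact hadj) (G.loopless.irrefl _)
        · simp [hi, hj]
      · simp [hi]
    · simp [hadj]

lemma pSpec_nonneg {n : ℕ} (hn : 0 < n) (G : SimpleGraph (Fin n)) {p : ℝ} (hp : 0 < p) :
    0 ≤ pSpec G p :=
  le_csSup (pSpec_bdd G hp) (pSpec_mem_zero hn G hp)

theorem stmt3 {n : ℕ} (G : SimpleGraph (Fin n)) (p q : ℝ) (hq : 1 ≤ q) (hpq : q < p) :
    pSpec G p * (n : ℝ) ^ (2 / p) ≤ pSpec G q * (n : ℝ) ^ (2 / q) := by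
  have hq0 : 0 < q := lt_of_lt_of_le one_pos hq
  have hp0 : 0 < p := lt_trans hq0 hpq
  rcases Nat.eq_zero_or_pos n with hn | hn
  · subst hn
    simp [Real.zero_rpow (by positivity : (2:ℝ)/p ≠ 0),
      Real.zero_rpow (by positivity : (2:ℝ)/q ≠ 0)]
  have npos : (0:ℝ) < n := by exact_mod_cast hn
  have hspecq : 0 ≤ pSpec G q := pSpec_nonneg hn G hq0
  -- key: pSpec G p ≤ pSpec G q * n ^ (2/q - 2/p)
  have key : pSpec G p ≤ pSpec G q * (n : ℝ) ^ (2/q - 2/p) := by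
    refine Real.sSup_le ?_
      (mul_nonneg hspecq (Real.rpow_nonneg npos.le _))
    rintro y ⟨x, hx, rfl⟩
    set S : ℝ := ∑ i, |x i| ^ q with hSdef
    have hSnonneg : ∀ i ∈ Finset.univ, (0:ℝ) ≤ |x i| ^ q :=
      fun i _ => Real.rpow_nonneg (abs_nonneg _) q
    have hxne : ∃ i, x i ≠ 0 := by
      by_contra h
      push_neg at h
      have : (∑ i, |x i| ^ p) = 0 := by
        refine Finset.sum_eq_zero fun i _ => ?_
        rw [h i]
        simp [Real.zero_rpow hp0.ne']
      rw [this] at hx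
      norm_num at hx
    obtain ⟨i0, hi0⟩ := hxne
    have hS : 0 < S := by
      refine Finset.sum_pos' hSnonneg ⟨i0, Finset.mem_univ i0, ?_⟩
      exact Real.rpow_pos_of_pos (abs_pos.2 hi0) q
    set c : ℝ := S ^ (1/q) with hcdef
    have hc : 0 < c := Real.rpow_pos_of_pos hS (1/q)
    have hcq : c ^ q = S := by
      rw [hcdef, ← Real.rpow_mul hS.le, one_div, inv_mul_cancel₀ hq0.ne', Real.rpow_one]
    set z : Fin n → ℝ := fun i => x i / c with hzdef
    have hz1 : (∑ i, |z i| ^ q) = 1 := by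
      have hzq : ∀ i, |z i| ^ q = |x i| ^ q / S := by
        intro i
        rw [hzdef]
        dsimp only
        rw [abs_div, abs_of_pos hc, Real.div_rpow (abs_nonneg _) hc.le, hcq]
      simp_rw [hzq]
      rw [← Finset.sum_div, ← hSdef, div_self hS.ne']
    have hmemz : (∑ i, ∑ j, if G.Adj i j then z i * z j else 0) ≤ pSpec G q :=
      le_csSup (pSpec_bdd G hq0) ⟨z, hz1, rfl⟩
    have hQ : (∑ i, ∑ j, if G.Adj i j then x i * x j else 0)
        = c ^ 2 * (∑ i, ∑ j, if G.Adj i j then z i * z j else 0) := by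
      rw [Finset.mul_sum]
      refine Finset.sum_congr rfl fun i _ => ?_
      rw [Finset.mul_sum]
      refine Finset.sum_congr rfl fun j _ => ?_
      split
      · rw [hzdef]
        dsimp only
        field_simp
      · ring
    -- Hölder / power mean
    have hS_le : S ≤ (n:ℝ) ^ (1 - q/p) := by
      have h1 : 1 ≤ p/q := (one_le_div hq0).2 hpq.le
      have hHold := Real.inner_le_weight_mul_Lp_of_nonneg (Finset.univ : Finset (Fin n)) h1
        (fun _ => (1:ℝ)) (fun i => |x i| ^ q) (fun _ => zero_le_one)
        (fun i => Real.rpow_nonneg (abs_nonneg _) _)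
      simp only [one_mul] at hHold
      have hpow : ∀ i : Fin n, (|x i| ^ q) ^ (p/q) = |x i| ^ p := by
        intro i
        rw [← Real.rpow_mul (abs_nonneg _)]
        congr 1
        field_simp
      simp_rw [hpow] at hHold
      rw [hx] at hHold
      simp only [Finset.sum_const, Finset.card_univ, Fintype.card_fin, nsmul_eq_mul,
        mul_one, Real.one_rpow] at hHold
      calc S ≤ ((n:ℝ) * 1) ^ (1 - (p/q)⁻¹) * 1 := by
            simpa using hHold
        _ = (n:ℝ) ^ (1 - q/p) := by rw [mul_one, mul_one, inv_div]
    have hc2 : c ^ 2 ≤ (n:ℝ) ^ (2/q - 2/p) := by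
      have hc2' : c ^ 2 = S ^ (2/q) := by
        rw [hcdef, ← Real.rpow_natCast (S ^ (1/q)) 2, ← Real.rpow_mul hS.le]
        congr 1
        push_cast
        ring
      rw [hc2']
      calc S ^ (2/q) ≤ ((n:ℝ) ^ (1 - q/p)) ^ (2/q) :=
            Real.rpow_le_rpow hS.le hS_le (by positivity)
        _ = (n:ℝ) ^ ((1 - q/p) * (2/q)) := (Real.rpow_mul npos.le _ _).symm
        _ = (n:ℝ) ^ (2/q - 2/p) := by
            congr 1
            field_simp
    rw [hQ]
    calc c ^ 2 * (∑ i, ∑ j, if G.Adj i j then z i * z j else 0)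
        ≤ c ^ 2 * pSpec G q := mul_le_mul_of_nonneg_left hmemz (by positivity)
      _ ≤ (n:ℝ) ^ (2/q - 2/p) * pSpec G q := mul_le_mul_of_nonneg_right hc2 hspecq
      _ = pSpec G q * (n:ℝ) ^ (2/q - 2/p) := mul_comm _ _
  calc pSpec G p * (n : ℝ) ^ (2 / p)
      ≤ (pSpec G q * (n : ℝ) ^ (2/q - 2/p)) * (n : ℝ) ^ (2 / p) :=
        mul_le_mul_of_nonneg_right key (Real.rpow_nonneg npos.le _)
    _ = pSpec G q * (n : ℝ) ^ (2 / q) := by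
        rw [mul_assoc, ← Real.rpow_add npos, sub_add_cancel]
end

section
/- Let r ≥ 2 and p ≥ 1. If G is a K_{r+1}-free graph of order n, then λ^(p)(G) ≤ (1 - 1/r)^(1/p) (2 e(G))^(1 - 1/p). -/
open Finset

open scoped Classical

section MSaux

variable {V : Type*} [Fintype V] [DecidableEq V]

private def sgn (a b : V) : V → ℝ := fun k => if k = a then 1 else if k = b then -1 else 0

private lemma pair_sum (a b : V) (hab : a ≠ b) (g : V → ℝ) :
    ∑ k, g k * sgn a b k = g a - g b := by
  rw [← Finset.sum_subset (Finset.subset_univ ({a, b} : Finset V))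
    (fun x _ hx => by
      simp only [Finset.mem_insert, Finset.mem_singleton, not_or] at hx
      simp [sgn, hx.1, hx.2])]
  rw [Finset.sum_pair hab]
  have h1 : sgn a b a = (1:ℝ) := if_pos rfl
  have h2 : sgn a b b = (-1:ℝ) := by
    show (if b = a then (1:ℝ) else if b = b then -1 else 0) = -1
    rw [if_neg hab.symm, if_pos rfl]
  rw [h1, h2]; ring

private lemma Q_shift (w : V → V → ℝ) (y : V → ℝ) (a b : V) (hab : a ≠ b)
    (haa : w a a = 0) (hbb : w b b = 0) (hab0 : w a b = 0) (hba0 : w b a = 0) (c : ℝ) :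
    ∑ i, ∑ j, w i j * (y i + c * sgn a b i) * (y j + c * sgn a b j)
    = (∑ i, ∑ j, w i j * y i * y j)
      + c * ((∑ k, w k a * y k) - (∑ k, w k b * y k))
      + c * ((∑ k, w a k * y k) - (∑ k, w b k * y k)) := by
  have step1 : ∑ i, ∑ j, w i j * (y i + c * sgn a b i) * (y j + c * sgn a b j)
      = (∑ i, ∑ j, w i j * y i * y j)
        + c * (∑ i, ∑ j, (w i j * y i) * sgn a b j)
        + c * (∑ i, ∑ j, (w i j * y j) * sgn a b i)
        + (c * c) * (∑ i, ∑ j, (w i j * sgn a b j) * sgn a b i) := by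
    rw [show (∑ i, ∑ j, w i j * (y i + c * sgn a b i) * (y j + c * sgn a b j))
        = ∑ i, ∑ j, (w i j * y i * y j + c * ((w i j * y i) * sgn a b j)
          + c * ((w i j * y j) * sgn a b i) + (c * c) * ((w i j * sgn a b j) * sgn a b i))
      from Finset.sum_congr rfl fun i _ => Finset.sum_congr rfl fun j _ => by ring]
    simp only [Finset.sum_add_distrib, ← Finset.mul_sum]
  have p2 : (∑ i, ∑ j, (w i j * y i) * sgn a b j)
      = (∑ k, w k a * y k) - (∑ k, w k b * y k) := by
    rw [show (∑ i, ∑ j, (w i j * y i) * sgn a b j)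
        = ∑ i, (w i a * y i - w i b * y i)
      from Finset.sum_congr rfl fun i _ => pair_sum a b hab (fun j => w i j * y i)]
    rw [Finset.sum_sub_distrib]
  have p3 : (∑ i, ∑ j, (w i j * y j) * sgn a b i)
      = (∑ k, w a k * y k) - (∑ k, w b k * y k) := by
    rw [show (∑ i, ∑ j, (w i j * y j) * sgn a b i)
        = ∑ i, (∑ j, w i j * y j) * sgn a b i
      from Finset.sum_congr rfl fun i _ => by rw [Finset.sum_mul]]
    exact pair_sum a b hab (fun i => ∑ j, w i j * y j)
  have p4 : (∑ i, ∑ j, (w i j * sgn a b j) * sgn a b i) = 0 := by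
    rw [show (∑ i, ∑ j, (w i j * sgn a b j) * sgn a b i)
        = ∑ i, (w i a - w i b) * sgn a b i
      from Finset.sum_congr rfl fun i _ => by
        rw [show (∑ j, (w i j * sgn a b j) * sgn a b i)
            = (∑ j, w i j * sgn a b j) * sgn a b i from (Finset.sum_mul _ _ _).symm,
          pair_sum a b hab (fun j => w i j)]]
    rw [pair_sum a b hab (fun i => w i a - w i b)]
    rw [haa, hbb, hab0, hba0]; ring
  rw [step1, p2, p3, p4]; ring

/-- Motzkin–Straus, easy direction, support-induction form. -/
private lemma MS_aux {r : ℕ} (hr : 1 ≤ r) (G : SimpleGraph V) [DecidableRel G.Adj]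
    (hG : G.CliqueFree (r + 1)) :
    ∀ k : ℕ, ∀ s : Finset V, s.card ≤ k → ∀ y : V → ℝ, (∀ i, 0 ≤ y i) →
      (∀ i ∉ s, y i = 0) → (∑ i, y i) = 1 →
      (∑ i, ∑ j, (if G.Adj i j then (1:ℝ) else 0) * y i * y j) ≤ 1 - 1 / (r : ℝ) := by
  intro k
  induction k with
  | zero =>
      intro s hs y h0 hsupp h1
      exfalso
      have hse : s = ∅ := Finset.card_eq_zero.mp (Nat.le_zero.mp hs)
      have : (∑ i, y i) = 0 := Finset.sum_eq_zero fun i _ => hsupp i (by simp [hse])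
      rw [h1] at this; norm_num at this
  | succ k ih =>
      intro s hs y h0 hsupp h1
      by_cases hex : ∃ a ∈ s, ∃ b ∈ s, a ≠ b ∧ ¬ G.Adj a b ∧ 0 < y a ∧ 0 < y b
      · -- shifting case
        obtain ⟨a₀, ha₀, b₀, hb₀, hab₀, hnadj₀, hya₀, hyb₀⟩ := hex
        set w : V → V → ℝ := fun i j => if G.Adj i j then (1:ℝ) else 0 with hw
        have key : ∀ a b : V, a ∈ s → b ∈ s → a ≠ b → ¬ G.Adj a b → 0 < y b →
            (∑ j, w b j * y j) ≤ (∑ j, w a j * y j) →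
            (∑ i, ∑ j, w i j * y i * y j) ≤ 1 - 1 / (r : ℝ) := by
          intro a b ha hb hab hnadj hyb hRab
          set y' : V → ℝ := fun i => y i + y b * sgn a b i with hy'
          have hwsymm : ∀ i j, w i j = w j i := by
            intro i j; simp only [hw]
            by_cases h : G.Adj i j
            · rw [if_pos h, if_pos h.symm]
            · rw [if_neg h, if_neg (fun h' : G.Adj j i => h h'.symm)]
          have hwaa : w a a = 0 := by simp [hw]
          have hwbb : w b b = 0 := by simp [hw]
          have hwab : w a b = 0 := by simp [hw, hnadj]
          have hwba : w b a = 0 := by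
            simp only [hw]
            rw [if_neg (fun h' : G.Adj b a => hnadj h'.symm)]
          have hQ : (∑ i, ∑ j, w i j * y' i * y' j)
              = (∑ i, ∑ j, w i j * y i * y j)
                + y b * ((∑ k, w k a * y k) - (∑ k, w k b * y k))
                + y b * ((∑ k, w a k * y k) - (∑ k, w b k * y k)) :=
            Q_shift w y a b hab hwaa hwbb hwab hwba (y b)
          have hcols : (∑ k, w k a * y k) = (∑ k, w a k * y k) :=
            Finset.sum_congr rfl fun k _ => by rw [hwsymm k a]
          have hcols' : (∑ k, w k b * y k) = (∑ k, w b k * y k) :=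
            Finset.sum_congr rfl fun k _ => by rw [hwsymm k b]
          have hmono : (∑ i, ∑ j, w i j * y i * y j) ≤ (∑ i, ∑ j, w i j * y' i * y' j) := by
            rw [hQ, hcols, hcols']
            nlinarith [hRab, hyb.le]
          have hsa : sgn a b a = (1:ℝ) := if_pos rfl
          have hsb : sgn a b b = (-1:ℝ) := by
            show (if b = a then (1:ℝ) else if b = b then -1 else 0) = -1
            rw [if_neg hab.symm, if_pos rfl]
          have hso : ∀ i, i ≠ a → i ≠ b → sgn a b i = 0 := by
            intro i hia hib
            show (if i = a then (1:ℝ) else if i = b then -1 else 0) = 0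
            rw [if_neg hia, if_neg hib]
          have h0' : ∀ i, 0 ≤ y' i := by
            intro i
            by_cases hia : i = a
            · subst hia; simp only [hy', hsa]
              nlinarith [h0 i, hyb.le]
            · by_cases hib : i = b
              · subst hib; simp only [hy', hsb]; ring_nf; exact le_rfl
              · simp only [hy', hso i hia hib]
                simpa using h0 i
          have hsupp' : ∀ i ∉ s.erase b, y' i = 0 := by
            intro i hi
            rw [Finset.mem_erase] at hi
            push_neg at hi
            by_cases hib : i = b
            · subst hib; simp only [hy', hsb]; ring
            · have his : i ∉ s := hi hib
              have hia : i ≠ a := fun h => his (h ▸ ha)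
              simp only [hy', hso i hia hib]
              rw [hsupp i his]; ring
          have h1' : (∑ i, y' i) = 1 := by
            simp only [hy']
            rw [Finset.sum_add_distrib, h1, ← Finset.mul_sum]
            rw [show (∑ i, sgn a b i) = 0 by
              have := pair_sum a b hab (fun _ => (1:ℝ))
              simpa using this]
            ring
          have hcard : (s.erase b).card ≤ k := by
            rw [Finset.card_erase_of_mem hb]
            omega
          exact le_trans hmono (ih (s.erase b) hcard y' h0' hsupp' h1')
        rcases le_total (∑ j, w b₀ j * y j) (∑ j, w a₀ j * y j) with h | h
        · exact key a₀ b₀ ha₀ hb₀ hab₀ hnadj₀ hyb₀ h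
        · exact key b₀ a₀ hb₀ ha₀ hab₀.symm (fun h' => hnadj₀ h'.symm) hya₀ h
      · -- clique case
        push_neg at hex
        set T : Finset V := s.filter (fun i => 0 < y i) with hT
        have hyT : ∀ i ∉ T, y i = 0 := by
          intro i hi
          rw [hT, Finset.mem_filter, not_and_or] at hi
          rcases hi with hi | hi
          · exact hsupp i hi
          · push_neg at hi; exact le_antisymm hi (h0 i)
        have hclique : ∀ i ∈ T, ∀ j ∈ T, i ≠ j → G.Adj i j := by
          intro i hi j hj hij
          rw [hT, Finset.mem_filter] at hi hj
          by_contra hadj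
          exact absurd hj.2 (not_lt.mpr (hex i hi.1 j hj.1 hij hadj hi.2))
        have hTsum : (∑ i ∈ T, y i) = 1 := by
          rw [← h1]
          exact Finset.sum_subset (Finset.subset_univ T) (fun i _ hi => hyT i hi)
        have hTne : 0 < T.card := by
          rcases Finset.eq_empty_or_nonempty T with h | h
          · rw [h] at hTsum; simp at hTsum
          · exact Finset.card_pos.mpr h
        have hTcard : T.card ≤ r := by
          by_contra hc
          push_neg at hc
          obtain ⟨T', hT'sub, hT'card⟩ := Finset.exists_subset_card_eq hc
          refine hG T' ⟨?_, hT'card⟩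
          intro i hi j hj hij
          exact hclique i (hT'sub hi) j (hT'sub hj) hij
        -- restrict the double sum to T
        have hrestrict : (∑ i, ∑ j, (if G.Adj i j then (1:ℝ) else 0) * y i * y j)
            = ∑ i ∈ T, ∑ j ∈ T, (if G.Adj i j then (1:ℝ) else 0) * y i * y j := by
          rw [← Finset.sum_subset (Finset.subset_univ T)
            (fun i _ hi => by
              rw [hyT i hi]
              exact Finset.sum_eq_zero fun j _ => by ring)]
          refine Finset.sum_congr rfl fun i _ => ?_
          rw [← Finset.sum_subset (Finset.subset_univ T)
            (fun j _ hj => by rw [hyT j hj]; ring)]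
        have hbound : ∑ i ∈ T, ∑ j ∈ T, (if G.Adj i j then (1:ℝ) else 0) * y i * y j
            ≤ (∑ i ∈ T, y i) ^ 2 - ∑ i ∈ T, (y i) ^ 2 := by
          have : ∀ i ∈ T, (∑ j ∈ T, (if G.Adj i j then (1:ℝ) else 0) * y i * y j)
              ≤ ∑ j ∈ T.erase i, y i * y j := by
            intro i hi
            rw [← Finset.add_sum_erase T _ hi]
            have hii : (if G.Adj i i then (1:ℝ) else 0) * y i * y i = 0 := by
              simp [G.irrefl]
            rw [hii, zero_add]
            refine Finset.sum_le_sum fun j hj => ?_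
            by_cases h : G.Adj i j
            · rw [if_pos h, one_mul]
            · rw [if_neg h]
              have : y i * y j ≥ 0 := mul_nonneg (h0 i) (h0 j)
              linarith
          calc ∑ i ∈ T, ∑ j ∈ T, (if G.Adj i j then (1:ℝ) else 0) * y i * y j
              ≤ ∑ i ∈ T, ∑ j ∈ T.erase i, y i * y j := Finset.sum_le_sum this
            _ = ∑ i ∈ T, ((∑ j ∈ T, y i * y j) - y i * y i) := by
                refine Finset.sum_congr rfl fun i hi => ?_
                rw [← Finset.add_sum_erase T _ hi]; ring
            _ = (∑ i ∈ T, y i) ^ 2 - ∑ i ∈ T, (y i) ^ 2 := by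
                rw [Finset.sum_sub_distrib, ← Finset.sum_mul_sum]
                have e1 : (∑ i ∈ T, y i * y i) = ∑ i ∈ T, (y i) ^ 2 :=
                  Finset.sum_congr rfl fun i _ => (sq (y i)).symm
                rw [e1]; ring
        have hsq : (1 : ℝ) / (r : ℝ) ≤ ∑ i ∈ T, (y i) ^ 2 := by
          have h2 : (1:ℝ) ≤ (T.card : ℝ) * ∑ i ∈ T, (y i) ^ 2 := by
            have := sq_sum_le_card_mul_sum_sq (s := T) (f := y)
            rw [hTsum] at this; simpa using this
          have hc1 : (0:ℝ) < (T.card : ℝ) := by exact_mod_cast hTne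
          have hc2 : (T.card : ℝ) ≤ (r : ℝ) := by exact_mod_cast hTcard
          have hr0 : (0:ℝ) < (r:ℝ) := lt_of_lt_of_le hc1 hc2
          rw [div_le_iff₀ hr0]
          calc (1:ℝ) ≤ (T.card : ℝ) * ∑ i ∈ T, (y i) ^ 2 := h2
            _ ≤ (r : ℝ) * ∑ i ∈ T, (y i) ^ 2 := by
                refine mul_le_mul_of_nonneg_right hc2 ?_
                positivity
            _ = (∑ i ∈ T, (y i) ^ 2) * (r : ℝ) := mul_comm _ _
        rw [hrestrict]
        calc ∑ i ∈ T, ∑ j ∈ T, (if G.Adj i j then (1:ℝ) else 0) * y i * y j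
            ≤ (∑ i ∈ T, y i) ^ 2 - ∑ i ∈ T, (y i) ^ 2 := hbound
          _ = 1 - ∑ i ∈ T, (y i) ^ 2 := by rw [hTsum]; ring
          _ ≤ 1 - 1 / (r : ℝ) := by linarith

lemma motzkin_straus {r : ℕ} (hr : 1 ≤ r) (G : SimpleGraph V) [DecidableRel G.Adj]
    (hG : G.CliqueFree (r + 1)) (y : V → ℝ) (h0 : ∀ i, 0 ≤ y i) (h1 : (∑ i, y i) = 1) :
    (∑ i, ∑ j, if G.Adj i j then y i * y j else 0) ≤ 1 - 1 / (r : ℝ) := by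
  have := MS_aux hr G hG (Finset.univ.card) Finset.univ le_rfl y h0 (by simp) h1
  calc (∑ i, ∑ j, if G.Adj i j then y i * y j else 0)
      = ∑ i, ∑ j, (if G.Adj i j then (1:ℝ) else 0) * y i * y j := by
        refine Finset.sum_congr rfl fun i _ => Finset.sum_congr rfl fun j _ => ?_
        by_cases h : G.Adj i j <;> simp [h]
    _ ≤ 1 - 1 / (r : ℝ) := this

end MSaux

theorem stmt6 {n : ℕ} (r : ℕ) (hr : 2 ≤ r) (p : ℝ) (hp : 1 ≤ p)
    (G : SimpleGraph (Fin n)) [DecidableRel G.Adj] (hG : G.CliqueFree (r + 1)) :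
    pSpec G p ≤ (1 - 1 / (r : ℝ)) ^ (1 / p) * (2 * (G.edgeFinset.card : ℝ)) ^ (1 - 1 / p) := by
  have hr1 : (1:ℝ) ≤ (r:ℝ) := by exact_mod_cast le_trans one_le_two hr
  have hrpos : (0:ℝ) < (r:ℝ) := lt_of_lt_of_le one_pos hr1
  have hbase : (0:ℝ) ≤ 1 - 1/(r:ℝ) := by
    have : 1/(r:ℝ) ≤ 1 := by rw [div_le_one hrpos]; exact hr1
    linarith
  have hppos : (0:ℝ) < p := lt_of_lt_of_le one_pos hp
  have hRHS : (0:ℝ) ≤ (1 - 1 / (r : ℝ)) ^ (1 / p) * (2 * (G.edgeFinset.card : ℝ)) ^ (1 - 1 / p) :=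
    mul_nonneg (Real.rpow_nonneg hbase _) (Real.rpow_nonneg (by positivity) _)
  refine Real.sSup_le ?_ hRHS
  rintro t ⟨x, hx1, rfl⟩
  set A : Finset (Fin n × Fin n) := Finset.univ.filter (fun z => G.Adj z.1 z.2) with hA
  set f : Fin n × Fin n → ℝ := fun z => |x z.1| * |x z.2| with hf
  have hf0 : ∀ z, 0 ≤ f z := fun z => mul_nonneg (abs_nonneg _) (abs_nonneg _)
  have hprod : ∀ g : Fin n × Fin n → ℝ,
      ∑ z ∈ A, g z = ∑ i, ∑ j, if G.Adj i j then g (i, j) else 0 := by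
    intro g
    rw [hA, Finset.sum_filter]
    exact Fintype.sum_prod_type (f := fun z => if G.Adj z.1 z.2 then g z else 0)
  have hstepA : (∑ i, ∑ j, if G.Adj i j then x i * x j else 0) ≤ ∑ z ∈ A, f z := by
    rw [hprod f]
    refine Finset.sum_le_sum fun i _ => Finset.sum_le_sum fun j _ => ?_
    by_cases h : G.Adj i j
    · rw [if_pos h, if_pos h]
      calc x i * x j ≤ |x i * x j| := le_abs_self _
        _ = |x i| * |x j| := abs_mul _ _
    · rw [if_neg h, if_neg h]
  have hholder : ∑ z ∈ A, f z ≤ ((A.card : ℝ)) ^ (1 - p⁻¹) * (∑ z ∈ A, f z ^ p) ^ p⁻¹ := by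
    have := Real.inner_le_weight_mul_Lp_of_nonneg A hp (fun _ => (1:ℝ)) f
      (fun _ => zero_le_one) hf0
    simpa using this
  set y : Fin n → ℝ := fun i => |x i| ^ p with hy
  have hy0 : ∀ i, 0 ≤ y i := fun i => Real.rpow_nonneg (abs_nonneg _) _
  have hMS : (∑ z ∈ A, f z ^ p) ≤ 1 - 1/(r:ℝ) := by
    have hms := motzkin_straus (r := r) (le_trans one_le_two hr) G hG y hy0 hx1
    calc ∑ z ∈ A, f z ^ p = ∑ z ∈ A, y z.1 * y z.2 :=
          Finset.sum_congr rfl fun z _ => Real.mul_rpow (abs_nonneg _) (abs_nonneg _)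
      _ = ∑ i, ∑ j, if G.Adj i j then y i * y j else 0 := hprod _
      _ ≤ 1 - 1/(r:ℝ) := hms
  have hcard : (A.card : ℝ) = 2 * (G.edgeFinset.card : ℝ) := by
    have h2 : A.card = ∑ i, ∑ j, if G.Adj i j then 1 else 0 := by
      rw [hA, Finset.card_filter]
      exact Fintype.sum_prod_type (f := fun z => if G.Adj z.1 z.2 then 1 else 0)
    have : A.card = 2 * G.edgeFinset.card := by
      rw [h2, ← SimpleGraph.sum_degrees_eq_twice_card_edges]
      refine Finset.sum_congr rfl fun i _ => ?_
      have hd : G.degree i = (Finset.univ.filter (G.Adj i)).card := by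
        rw [← SimpleGraph.neighborFinset_eq_filter]; rfl
      rw [hd, Finset.card_filter]
    exact_mod_cast this
  have hsumnn : (0:ℝ) ≤ ∑ z ∈ A, f z ^ p :=
    Finset.sum_nonneg fun z _ => Real.rpow_nonneg (hf0 z) _
  have main : (∑ i, ∑ j, if G.Adj i j then x i * x j else 0)
      ≤ (1 - 1 / (r : ℝ)) ^ (1 / p) * (2 * (G.edgeFinset.card : ℝ)) ^ (1 - 1 / p) :=
  calc (∑ i, ∑ j, if G.Adj i j then x i * x j else 0)
      ≤ ∑ z ∈ A, f z := hstepA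
    _ ≤ ((A.card : ℝ)) ^ (1 - p⁻¹) * (∑ z ∈ A, f z ^ p) ^ p⁻¹ := hholder
    _ ≤ ((A.card : ℝ)) ^ (1 - p⁻¹) * (1 - 1/(r:ℝ)) ^ p⁻¹ :=
        mul_le_mul_of_nonneg_left
          (Real.rpow_le_rpow hsumnn hMS (by positivity))
          (Real.rpow_nonneg (by positivity) _)
    _ = (1 - 1 / (r : ℝ)) ^ (1 / p) * (2 * (G.edgeFinset.card : ℝ)) ^ (1 - 1 / p) := by
        rw [hcard, one_div, one_div, mul_comm]
  convert main using 4
end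

section
/- Let r ≥ 2 and p ≥ 1. If G is a K_{r+1}-free graph of order n, then λ^(p)(G) ≤ (1 - 1/r) n^(2 - 2/p). -/
open Finset

open scoped Classical

lemma ms_aux {V : Type*} [Fintype V] :
    ∀ r : ℕ, 1 ≤ r → ∀ G : SimpleGraph V, G.CliqueFree (r + 1) →
      ∀ y : V → ℝ, (∀ i, 0 ≤ y i) →
      (∑ i, ∑ j, if G.Adj i j then y i * y j else 0) ≤ (1 - 1/(r:ℝ)) * (∑ i, y i)^2 := by
  intro r hr
  induction r, hr using Nat.le_induction with
  | base =>
    intro G hG y hy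
    rw [SimpleGraph.cliqueFree_two] at hG
    subst hG
    simp
  | succ r hr IH =>
    intro G hG y hy
    cases isEmpty_or_nonempty V with
    | inl h => simp
    | inr h =>
      set d : V → ℝ := fun i => ∑ j, if G.Adj i j then y j else 0 with hd
      obtain ⟨m, -, hm⟩ := Finset.exists_max_image Finset.univ d ⟨Classical.arbitrary V, mem_univ _⟩
      set A : Finset V := G.neighborFinset m with hA
      set a : ℝ := ∑ i ∈ A, y i with ha
      set b : ℝ := ∑ i ∈ Aᶜ, y i with hb
      have ha0 : 0 ≤ a := Finset.sum_nonneg fun i _ => hy i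
      have hb0 : 0 ≤ b := Finset.sum_nonneg fun i _ => hy i
      have hs : ∑ i, y i = a + b := (Finset.sum_add_sum_compl A y).symm
      have hdm : d m = a := by
        rw [hd, ha]
        simp only [hA, SimpleGraph.neighborFinset_eq_filter]
        rw [Finset.sum_filter]
      have hdmax : ∀ i, d i ≤ a := fun i => hdm ▸ hm i (mem_univ i)
      -- the restricted graph on the neighborhood of m
      set H : SimpleGraph V :=
        { Adj := fun i j => G.Adj i j ∧ i ∈ A ∧ j ∈ A
          symm := ⟨by rintro i j ⟨h1, h2, h3⟩; exact ⟨h1.symm, h3, h2⟩⟩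
          loopless := ⟨fun i hh => G.irrefl hh.1⟩ } with hH
      have hmA : m ∉ A := by simp [hA]
      have hHfree : H.CliqueFree (r + 1) := by
        intro t ht
        have htA : ∀ i ∈ t, i ∈ A := by
          intro i hi
          have h2 : 1 < t.card := by rw [ht.2]; omega
          obtain ⟨j, hj, hji⟩ := Finset.exists_mem_ne h2 i
          exact (ht.1 hj hi hji).2.2
        have hmt : m ∉ t := fun hmt => hmA (htA m hmt)
        refine hG (insert m t) ⟨?_, ?_⟩
        · intro u hu v hv huv
          simp only [coe_insert, Set.mem_insert_iff, mem_coe] at hu hv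
          rcases hu with rfl | hu
          · rcases hv with rfl | hv
            · exact absurd rfl huv
            · rw [hA] at htA
              exact (SimpleGraph.mem_neighborFinset G u v).mp (htA v hv)
          · rcases hv with rfl | hv
            · rw [hA] at htA
              exact ((SimpleGraph.mem_neighborFinset G v u).mp (htA u hu)).symm
            · exact (ht.1 hu hv huv).1
        · rw [Finset.card_insert_of_notMem hmt, ht.2]
      set y' : V → ℝ := fun i => if i ∈ A then y i else 0 with hy'
      have hy'n : ∀ i, 0 ≤ y' i := by
        intro i; rw [hy']; dsimp only
        split
        · exact hy i
        · exact le_rfl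
      have hy's : ∑ i, y' i = a := by
        rw [hy', ha]
        simp [Finset.sum_ite_mem]
      have hIH := IH H hHfree y' hy'n
      rw [hy's] at hIH
      have hterm0 : ∀ i j : V, i ∉ A ∨ j ∉ A → (@ite ℝ (H.Adj i j) (Classical.propDecidable _) (y' i * y' j) 0) = 0 := by
        intro i j hij
        apply if_neg
        intro hh
        rcases hij with hi | hj
        · exact hi hh.2.1
        · exact hj hh.2.2
      have hHsum : (∑ i ∈ A, ∑ j ∈ A, (if G.Adj i j then y i * y j else 0))
          = ∑ i, ∑ j, (@ite ℝ (H.Adj i j) (Classical.propDecidable _) (y' i * y' j) 0) := by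
        calc (∑ i ∈ A, ∑ j ∈ A, (if G.Adj i j then y i * y j else 0))
            = ∑ i ∈ A, ∑ j ∈ A, (@ite ℝ (H.Adj i j) (Classical.propDecidable _) (y' i * y' j) 0) := by
              apply sum_congr rfl; intro i hi; apply sum_congr rfl; intro j hj
              rw [hy']; dsimp only
              rw [if_pos hi, if_pos hj]
              by_cases hij : G.Adj i j
              · rw [if_pos hij, if_pos (show H.Adj i j from ⟨hij, hi, hj⟩)]
              · rw [if_neg hij, if_neg (fun hh : H.Adj i j => hij hh.1)]
          _ = ∑ i ∈ A, ∑ j, (@ite ℝ (H.Adj i j) (Classical.propDecidable _) (y' i * y' j) 0) := by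
              apply sum_congr rfl; intro i _
              exact Finset.sum_subset (Finset.subset_univ A)
                (fun j _ hj => hterm0 i j (Or.inr hj))
          _ = ∑ i, ∑ j, (@ite ℝ (H.Adj i j) (Classical.propDecidable _) (y' i * y' j) 0) := by
              apply Finset.sum_subset (Finset.subset_univ A)
              intro i _ hi
              apply Finset.sum_eq_zero
              intro j _
              exact hterm0 i j (Or.inl hi)
      have hIH2 : (∑ i ∈ A, ∑ j ∈ A, (if G.Adj i j then y i * y j else 0))
          ≤ (1 - 1/(r:ℝ)) * a^2 := hHsum.le.trans hIH
      have key2 : ∀ i : V, (∑ j, if G.Adj i j then y i * y j else 0) = y i * d i := by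
        intro i
        rw [hd]; dsimp only
        rw [Finset.mul_sum]
        apply sum_congr rfl
        intro j _
        by_cases hij : G.Adj i j <;> simp [hij]
      have hB : (∑ i ∈ Aᶜ, ∑ j, if G.Adj i j then y i * y j else 0) ≤ b * a := by
        calc (∑ i ∈ Aᶜ, ∑ j, if G.Adj i j then y i * y j else 0)
            = ∑ i ∈ Aᶜ, y i * d i := by
              apply sum_congr rfl; intro i _; exact key2 i
          _ ≤ ∑ i ∈ Aᶜ, y i * a :=
              Finset.sum_le_sum fun i _ => mul_le_mul_of_nonneg_left (hdmax i) (hy i)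
          _ = b * a := by rw [hb, Finset.sum_mul]
      have hAB : (∑ i ∈ A, ∑ j ∈ Aᶜ, if G.Adj i j then y i * y j else 0) ≤ b * a := by
        rw [Finset.sum_comm]
        have step : ∀ j ∈ Aᶜ, (∑ i ∈ A, if G.Adj i j then y i * y j else 0) ≤ y j * d j := by
          intro j _
          calc (∑ i ∈ A, if G.Adj i j then y i * y j else 0)
              ≤ ∑ i, if G.Adj i j then y i * y j else 0 := by
                apply Finset.sum_le_sum_of_subset_of_nonneg (Finset.subset_univ A)
                intro i _ _
                by_cases hij : G.Adj i j
                · rw [if_pos hij]; exact mul_nonneg (hy i) (hy j)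
                · rw [if_neg hij]
            _ = ∑ i, if G.Adj j i then y j * y i else 0 := by
                apply sum_congr rfl
                intro i _
                by_cases hij : G.Adj i j
                · rw [if_pos hij, if_pos hij.symm, mul_comm]
                · rw [if_neg hij, if_neg fun hh => hij hh.symm]
            _ = y j * d j := key2 j
        calc (∑ j ∈ Aᶜ, ∑ i ∈ A, if G.Adj i j then y i * y j else 0)
            ≤ ∑ j ∈ Aᶜ, y j * d j := Finset.sum_le_sum step
          _ ≤ ∑ j ∈ Aᶜ, y j * a :=
              Finset.sum_le_sum fun j _ => mul_le_mul_of_nonneg_left (hdmax j) (hy j)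
          _ = b * a := by rw [hb, Finset.sum_mul]
      have hr1 : (1:ℝ) ≤ (r:ℝ) := by exact_mod_cast hr
      have hrpos : (0:ℝ) < (r:ℝ) := by linarith
      have halg : (1 - 1/(r:ℝ)) * a^2 + b*a + b*a ≤ (1 - 1/((r:ℝ)+1)) * (a+b)^2 := by
        rw [← sub_nonneg]
        have heq : (1 - 1/((r:ℝ)+1)) * (a+b)^2 - ((1 - 1/(r:ℝ)) * a^2 + b*a + b*a)
            = (a - r*b)^2 / ((r:ℝ)*((r:ℝ)+1)) := by
          field_simp
          ring
        rw [heq]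
        positivity
      calc (∑ i, ∑ j, if G.Adj i j then y i * y j else 0)
          = (∑ i ∈ A, ∑ j, if G.Adj i j then y i * y j else 0)
            + ∑ i ∈ Aᶜ, ∑ j, if G.Adj i j then y i * y j else 0 :=
            (Finset.sum_add_sum_compl A _).symm
        _ = ((∑ i ∈ A, ∑ j ∈ A, if G.Adj i j then y i * y j else 0)
              + ∑ i ∈ A, ∑ j ∈ Aᶜ, if G.Adj i j then y i * y j else 0)
            + ∑ i ∈ Aᶜ, ∑ j, if G.Adj i j then y i * y j else 0 := by
            rw [← Finset.sum_add_distrib]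
            congr 1
            apply sum_congr rfl
            intro i _
            exact (Finset.sum_add_sum_compl A _).symm
        _ ≤ ((1 - 1/(r:ℝ)) * a^2 + b*a) + b*a :=
            add_le_add (add_le_add hIH2 hAB) hB
        _ ≤ (1 - 1/((r:ℝ)+1)) * (a+b)^2 := by
            have := halg; linarith
        _ = (1 - 1/((r+1:ℕ):ℝ)) * (∑ i, y i)^2 := by
            rw [hs]; push_cast; ring

theorem stmt7 {n : ℕ} (r : ℕ) (hr : 2 ≤ r) (p : ℝ) (hp : 1 ≤ p)
    (G : SimpleGraph (Fin n)) (hG : G.CliqueFree (r + 1)) :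
    pSpec G p ≤ (1 - 1 / (r : ℝ)) * (n : ℝ) ^ (2 - 2 / p) := by
  have hr1 : 1 ≤ r := by omega
  have hrr : (2:ℝ) ≤ (r:ℝ) := by exact_mod_cast hr
  have hfac : (0:ℝ) ≤ 1 - 1/(r:ℝ) := by
    have h1 : 1/(r:ℝ) ≤ 1 := by
      rw [div_le_one (by linarith)]
      linarith
    linarith
  have hRHS : 0 ≤ (1 - 1/(r:ℝ)) * (n:ℝ) ^ (2 - 2/p) :=
    mul_nonneg hfac (Real.rpow_nonneg (Nat.cast_nonneg n) _)
  apply Real.sSup_le _ hRHS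
  rintro z ⟨x, hx1, rfl⟩
  rcases Nat.eq_zero_or_pos n with hn | hn
  · subst hn; simp at hx1
  set y : Fin n → ℝ := fun i => |x i| with hy
  have hyn : ∀ i, 0 ≤ y i := fun i => abs_nonneg _
  have h1 : (∑ i, ∑ j, if G.Adj i j then x i * x j else 0)
      ≤ ∑ i, ∑ j, if G.Adj i j then y i * y j else 0 := by
    apply Finset.sum_le_sum; intro i _; apply Finset.sum_le_sum; intro j _
    by_cases hij : G.Adj i j
    · rw [if_pos hij, if_pos hij]
      calc x i * x j ≤ |x i * x j| := le_abs_self _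
        _ = y i * y j := by rw [hy]; dsimp only; rw [abs_mul]
    · rw [if_neg hij, if_neg hij]
  have h2 := ms_aux r hr1 G hG y hyn
  have hppos : 0 < p := lt_of_lt_of_le one_pos hp
  have hnpos : (0:ℝ) < (n:ℝ) := by exact_mod_cast hn
  have hsum : ∑ i, y i ≤ (n:ℝ) ^ (1 - 1/p) := by
    have hw := Real.arith_mean_le_rpow_mean Finset.univ (fun _ => 1/(n:ℝ)) y
      (fun i _ => by positivity)
      (by simp [Finset.card_univ]; field_simp) (fun i _ => hyn i) hp
    have e1 : ∑ i, (fun _ : Fin n => 1/(n:ℝ)) i * y i = (1/(n:ℝ)) * ∑ i, y i := by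
      rw [← Finset.mul_sum]
    have e2 : ∑ i, (fun _ : Fin n => 1/(n:ℝ)) i * y i ^ p = 1/(n:ℝ) := by
      dsimp only
      rw [← Finset.mul_sum]
      have hone : ∑ i, y i ^ p = 1 := by
        rw [← hx1]
      rw [hone, mul_one]
    rw [e1, e2] at hw
    calc ∑ i, y i = (n:ℝ) * ((1/(n:ℝ)) * ∑ i, y i) := by field_simp
      _ ≤ (n:ℝ) * ((1/(n:ℝ)) ^ (1/p)) := mul_le_mul_of_nonneg_left hw hnpos.le
      _ = (n:ℝ)^(1:ℝ) * ((n:ℝ)^(1/p))⁻¹ := by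
          rw [Real.rpow_one, one_div (n:ℝ), Real.inv_rpow hnpos.le]
      _ = (n:ℝ) ^ (1 - 1/p) := by
          rw [← Real.rpow_neg hnpos.le, ← Real.rpow_add hnpos]
          congr 1
  have hsq : (∑ i, y i)^2 ≤ ((n:ℝ)^(1 - 1/p))^2 :=
    pow_le_pow_left₀ (Finset.sum_nonneg fun i _ => hyn i) hsum 2
  have hpow : ((n:ℝ)^(1 - 1/p))^2 = (n:ℝ)^(2 - 2/p) := by
    rw [← Real.rpow_natCast ((n:ℝ)^(1 - 1/p)) 2, ← Real.rpow_mul hnpos.le]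
    congr 1
    push_cast
    ring
  calc (∑ i, ∑ j, if G.Adj i j then x i * x j else 0)
      ≤ ∑ i, ∑ j, if G.Adj i j then y i * y j else 0 := h1
    _ ≤ (1 - 1/(r:ℝ)) * (∑ i, y i)^2 := h2
    _ ≤ (1 - 1/(r:ℝ)) * ((n:ℝ)^(1 - 1/p))^2 := mul_le_mul_of_nonneg_left hsq hfac
    _ = (1 - 1/(r:ℝ)) * (n:ℝ) ^ (2 - 2/p) := by rw [hpow]
end

section
/- Let r ≥ 2, p > 1, and let G be a K_{r+1}-free graph of order n. If λ^(p)(G) = (1 - 1/r) n^(2 - 2/p), then r divides n and G is the Turán graph T_r(n). -/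
open Finset

open scoped Classical

namespace Stmt8Aux



noncomputable def Qf {n : ℕ} (G : SimpleGraph (Fin n)) (x : Fin n → ℝ) : ℝ :=
  ∑ i, ∑ j, if G.Adj i j then x i * x j else 0

noncomputable def Wrow {n : ℕ} (G : SimpleGraph (Fin n)) (y : Fin n → ℝ) (u : Fin n) : ℝ :=
  ∑ j, if G.Adj u j then y j else 0

lemma sq_identity {ι : Type*} (t : Finset ι) (a : ι → ℝ) :
    ∑ i ∈ t, ∑ j ∈ t, (a i - a j) ^ 2
      = 2 * ((t.card : ℝ) * ∑ i ∈ t, (a i) ^ 2) - 2 * (∑ i ∈ t, a i) ^ 2 := by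
  have h : ∀ i ∈ t, ∑ j ∈ t, (a i - a j) ^ 2
      = (t.card : ℝ) * a i ^ 2 - 2 * (a i * ∑ j ∈ t, a j) + ∑ j ∈ t, a j ^ 2 := by
    intro i _
    have : ∀ j ∈ t, (a i - a j) ^ 2 = a i ^ 2 - 2 * (a i * a j) + a j ^ 2 := by
      intro j _; ring
    rw [Finset.sum_congr rfl this, Finset.sum_add_distrib, Finset.sum_sub_distrib,
      Finset.sum_const, ← Finset.mul_sum, ← Finset.mul_sum, nsmul_eq_mul]
  rw [Finset.sum_congr rfl h, Finset.sum_add_distrib, Finset.sum_sub_distrib,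
    Finset.sum_const, ← Finset.mul_sum, ← Finset.mul_sum, nsmul_eq_mul, ← Finset.sum_mul]
  ring

lemma all_eq_of_sq {ι : Type*} (t : Finset ι) (a : ι → ℝ)
    (h : (t.card : ℝ) * ∑ i ∈ t, (a i) ^ 2 = (∑ i ∈ t, a i) ^ 2) :
    ∀ i ∈ t, ∀ j ∈ t, a i = a j := by
  have h0 : ∑ i ∈ t, ∑ j ∈ t, (a i - a j) ^ 2 = 0 := by
    rw [sq_identity, h]; ring
  intro i hi j hj
  have h1 := (Finset.sum_eq_zero_iff_of_nonneg
    (fun i _ => Finset.sum_nonneg fun j _ => sq_nonneg _)).1 h0 i hi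
  have h2 := (Finset.sum_eq_zero_iff_of_nonneg (fun j _ => sq_nonneg _)).1 h1 j hj
  have := pow_eq_zero_iff (n := 2) (by norm_num) |>.1 h2
  linarith [this]





lemma card_le_of_clique {n r : ℕ} {G : SimpleGraph (Fin n)} (hG : G.CliqueFree (r + 1))
    {s : Finset (Fin n)} (hs : G.IsClique s) : s.card ≤ r := by
  by_contra h
  push_neg at h
  obtain ⟨t, hts, ht⟩ := Finset.exists_subset_card_eq (s := s) (n := r + 1) h
  exact hG t ⟨hs.subset (by exact_mod_cast hts), ht⟩

lemma ms_clique {n r : ℕ} (hr : 0 < r) {G : SimpleGraph (Fin n)} (hG : G.CliqueFree (r + 1))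
    (y : Fin n → ℝ) (hy : ∀ i, 0 ≤ y i)
    (hA : ∀ u v, u ≠ v → ¬ G.Adj u v → y u * y v = 0) :
    Qf G y ≤ (1 - 1 / (r : ℝ)) * (∑ i, y i) ^ 2 := by
  classical
  set s : Finset (Fin n) := univ.filter (fun i => y i ≠ 0) with hs_def
  have hclique : G.IsClique s := by
    intro u hu v hv huv
    by_contra hnadj
    have h0 := hA u v huv hnadj
    simp only [hs_def, coe_filter, Set.mem_setOf_eq, mem_univ, true_and] at hu hv
    rcases mul_eq_zero.1 h0 with h | h
    · exact hu h
    · exact hv h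
  have hcard : s.card ≤ r := card_le_of_clique hG hclique
  have h1 : Qf G y ≤ (∑ i, y i) ^ 2 - ∑ i, (y i) ^ 2 := by
    have hb : Qf G y ≤ ∑ i, ∑ j, (if i = j then 0 else y i * y j) := by
      apply Finset.sum_le_sum
      intro i _
      apply Finset.sum_le_sum
      intro j _
      by_cases hadj : G.Adj i j
      · simp [hadj, (G.ne_of_adj hadj)]
      · simp only [hadj, if_false]
        by_cases hij : i = j
        · simp [hij]
        · simp [hij]; exact mul_nonneg (hy i) (hy j)
    have he : ∀ i : Fin n, ∑ j, (if i = j then 0 else y i * y j)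
        = y i * ∑ j, y j - y i ^ 2 := by
      intro i
      have : ∀ j : Fin n, (if i = j then 0 else y i * y j)
          = y i * y j - (if i = j then y i * y j else 0) := by
        intro j; by_cases h : i = j <;> simp [h]
      rw [Finset.sum_congr rfl fun j _ => this j, Finset.sum_sub_distrib,
        Finset.sum_ite_eq univ i (fun j => y i * y j)]
      simp [← Finset.mul_sum]
      ring
    calc Qf G y ≤ ∑ i, ∑ j, (if i = j then 0 else y i * y j) := hb
      _ = ∑ i, (y i * ∑ j, y j - y i ^ 2) := Finset.sum_congr rfl fun i _ => he i
      _ = (∑ i, y i) ^ 2 - ∑ i, y i ^ 2 := by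
          rw [Finset.sum_sub_distrib, ← Finset.sum_mul]; ring
  have e1 : ∑ i, y i = ∑ i ∈ s, y i := by
    rw [hs_def]; exact (Finset.sum_filter_ne_zero univ).symm
  have e2 : ∑ i, (y i) ^ 2 = ∑ i ∈ s, (y i) ^ 2 := by
    refine (Finset.sum_subset (Finset.filter_subset _ _) ?_).symm
    intro i _ hi
    simp only [hs_def, mem_filter, mem_univ, true_and, not_not] at hi
    simp [hi]
  have h2 : (∑ i, y i) ^ 2 ≤ (r : ℝ) * ∑ i, (y i) ^ 2 := by
    rw [e1, e2]
    calc (∑ i ∈ s, y i) ^ 2 ≤ (s.card : ℝ) * ∑ i ∈ s, (y i) ^ 2 := by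
          have := sq_sum_le_card_mul_sum_sq (s := s) (f := y)
          exact_mod_cast this
      _ ≤ (r : ℝ) * ∑ i ∈ s, (y i) ^ 2 := by
          apply mul_le_mul_of_nonneg_right
          · exact_mod_cast hcard
          · exact Finset.sum_nonneg fun i _ => sq_nonneg _
  have hrpos : (0 : ℝ) < r := by exact_mod_cast hr
  have h3 : (∑ i, y i) ^ 2 / (r : ℝ) ≤ ∑ i, (y i) ^ 2 := by
    rw [div_le_iff₀ hrpos]; linarith [h2]
  have : (1 - 1 / (r : ℝ)) * (∑ i, y i) ^ 2
      = (∑ i, y i) ^ 2 - (∑ i, y i) ^ 2 / (r : ℝ) := by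
    field_simp
  linarith [h1, h3]





lemma Qf_shift {n : ℕ} (G : SimpleGraph (Fin n)) (y : Fin n → ℝ) {u v : Fin n}
    (huv : u ≠ v) (hadj : ¬ G.Adj u v) :
    Qf G (Function.update (Function.update y v 0) u (y u + y v))
      = Qf G y + 2 * y v * (Wrow G y u - Wrow G y v) := by
  classical
  set w : Fin n → Fin n → ℝ := fun i j => if G.Adj i j then 1 else 0 with hw
  have hwsymm : ∀ i j, w i j = w j i := by
    intro i j; simp only [hw]; rw [SimpleGraph.adj_comm]
  have hwuu : ∀ i, w i i = 0 := by intro i; simp [hw]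
  have hwuv : w u v = 0 := by simp [hw, hadj]
  have hQw : ∀ x : Fin n → ℝ, Qf G x = ∑ i, ∑ j, w i j * (x i * x j) := by
    intro x
    refine Finset.sum_congr rfl fun i _ => Finset.sum_congr rfl fun j _ => ?_
    by_cases h : G.Adj i j <;> simp [hw, h]
  have hWw : ∀ t, Wrow G y t = ∑ j, w t j * y j := by
    intro t
    refine Finset.sum_congr rfl fun j _ => ?_
    by_cases h : G.Adj t j <;> simp [hw, h]
  set c : Fin n → ℝ := fun i => (if i = u then y v else 0) + (if i = v then -y v else 0) with hc
  have hz : ∀ i, Function.update (Function.update y v 0) u (y u + y v) i = y i + c i := by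
    intro i
    by_cases h1 : i = u
    · subst h1; rw [Function.update_self]; simp [hc, huv]
    · rw [Function.update_of_ne h1]
      by_cases h2 : i = v
      · subst h2; rw [Function.update_self]; simp [hc, h1]
      · rw [Function.update_of_ne h2]; simp [hc, h1, h2]
  have TB : ∀ i, ∑ j, (w i j * y i) * c j = (w i u * y i) * y v + (w i v * y i) * (-y v) := by
    intro i
    simp only [hc, mul_add, mul_ite, mul_zero, mul_neg]
    rw [Finset.sum_add_distrib, Finset.sum_ite_eq' univ u fun j => (w i j * y i) * y v,
      Finset.sum_ite_eq' univ v fun j => -((w i j * y i) * y v)]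
    simp
  have TBsum : ∑ i, ∑ j, (w i j * y i) * c j = y v * (Wrow G y u - Wrow G y v) := by
    rw [Finset.sum_congr rfl fun i _ => TB i]
    calc ∑ i, ((w i u * y i) * y v + (w i v * y i) * (-y v))
        = ∑ i, (y v * (w u i * y i) - y v * (w v i * y i)) := by
          refine Finset.sum_congr rfl fun i _ => ?_
          rw [hwsymm i u, hwsymm i v]; ring
      _ = y v * (∑ i, w u i * y i) - y v * (∑ i, w v i * y i) := by
          rw [Finset.sum_sub_distrib, ← Finset.mul_sum, ← Finset.mul_sum]
      _ = y v * (Wrow G y u - Wrow G y v) := by rw [hWw u, hWw v]; ring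
  have TCsum : ∑ i, ∑ j, c i * (w i j * y j) = y v * (Wrow G y u - Wrow G y v) := by
    have h0 : ∀ i, ∑ j, c i * (w i j * y j) = c i * ∑ j, w i j * y j := by
      intro i; rw [Finset.mul_sum]
    rw [Finset.sum_congr rfl fun i _ => h0 i]
    simp only [hc, add_mul, ite_mul, zero_mul, neg_mul]
    rw [Finset.sum_add_distrib, Finset.sum_ite_eq' univ u fun i => y v * ∑ j, w i j * y j,
      Finset.sum_ite_eq' univ v fun i => -(y v * ∑ j, w i j * y j)]
    simp only [mem_univ, if_true]
    rw [← hWw u, ← hWw v]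
    ring
  have TD : ∀ i j, c i * (w i j) * c j = 0 := by
    intro i j
    by_cases h1 : i = u
    · by_cases h3 : j = u
      · rw [h1, h3, hwuu]; ring
      · by_cases h4 : j = v
        · rw [h1, h4, hwuv]; ring
        · have hcj : c j = 0 := by simp [hc, h3, h4]
          rw [hcj]; ring
    · by_cases h2 : i = v
      · by_cases h3 : j = u
        · rw [h2, h3, hwsymm v u, hwuv]; ring
        · by_cases h4 : j = v
          · rw [h2, h4, hwuu]; ring
          · have hcj : c j = 0 := by simp [hc, h3, h4]
            rw [hcj]; ring
      · have hci : c i = 0 := by simp [hc, h1, h2]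
        rw [hci]; ring
  have TDsum : ∑ i, ∑ j, c i * (w i j) * c j = 0 :=
    Finset.sum_eq_zero fun i _ => Finset.sum_eq_zero fun j _ => TD i j
  rw [hQw, hQw]
  calc ∑ i, ∑ j, w i j * (Function.update (Function.update y v 0) u (y u + y v) i *
        Function.update (Function.update y v 0) u (y u + y v) j)
      = ∑ i, ∑ j, (w i j * (y i * y j) + ((w i j * y i) * c j + (c i * (w i j * y j)
          + c i * (w i j) * c j))) := by
        refine Finset.sum_congr rfl fun i _ => Finset.sum_congr rfl fun j _ => ?_
        rw [hz i, hz j]; ring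
    _ = (∑ i, ∑ j, w i j * (y i * y j)) + ((∑ i, ∑ j, (w i j * y i) * c j)
          + ((∑ i, ∑ j, c i * (w i j * y j)) + ∑ i, ∑ j, c i * (w i j) * c j)) := by
        simp only [Finset.sum_add_distrib]
    _ = (∑ i, ∑ j, w i j * (y i * y j)) + 2 * y v * (Wrow G y u - Wrow G y v) := by
        rw [TBsum, TCsum, TDsum]; ring


lemma ms {n r : ℕ} (hr : 0 < r) {G : SimpleGraph (Fin n)} (hG : G.CliqueFree (r + 1))
    (y : Fin n → ℝ) (hy : ∀ i, 0 ≤ y i) :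
    Qf G y ≤ (1 - 1 / (r : ℝ)) * (∑ i, y i) ^ 2 := by
  classical
  suffices H : ∀ k (y : Fin n → ℝ), (∀ i, 0 ≤ y i) →
      (univ.filter (fun i => y i ≠ 0)).card ≤ k →
      Qf G y ≤ (1 - 1 / (r : ℝ)) * (∑ i, y i) ^ 2 from
    H _ y hy le_rfl
  intro k
  induction k with
  | zero =>
    intro y hy hc
    refine ms_clique hr hG y hy fun u v _ _ => ?_
    have h0 : (univ.filter (fun i => y i ≠ 0)) = ∅ := Finset.card_eq_zero.1 (Nat.le_zero.1 hc)
    have hall : ∀ i, y i = 0 := by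
      intro i
      by_contra h
      have : i ∈ univ.filter (fun i => y i ≠ 0) := by simp [h]
      simp [h0] at this
    rw [hall u, hall v, mul_zero]
  | succ k ih =>
    intro y hy hc
    by_cases hA : ∀ u v, u ≠ v → ¬ G.Adj u v → y u * y v = 0
    · exact ms_clique hr hG y hy hA
    · push_neg at hA
      obtain ⟨u, v, huv, hnadj, hprod⟩ := hA
      have hyu : y u ≠ 0 := fun h => hprod (by rw [h, zero_mul])
      have hyv : y v ≠ 0 := fun h => hprod (by rw [h, mul_zero])
      have key : ∀ u v : Fin n, u ≠ v → ¬ G.Adj u v → y u ≠ 0 → y v ≠ 0 →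
          Wrow G y v ≤ Wrow G y u →
          Qf G y ≤ (1 - 1 / (r : ℝ)) * (∑ i, y i) ^ 2 := by
        intro u v huv hnadj hyu hyv hW
        set z := Function.update (Function.update y v 0) u (y u + y v) with hz_def
        have hzi : ∀ i, z i = if i = u then y u + y v else if i = v then 0 else y i := by
          intro i
          by_cases h1 : i = u
          · subst h1; rw [hz_def, Function.update_self]; simp
          · rw [hz_def, Function.update_of_ne h1, if_neg h1]
            by_cases h2 : i = v
            · subst h2; rw [Function.update_self, if_pos rfl]
            · rw [Function.update_of_ne h2, if_neg h2]
        have hz_nonneg : ∀ i, 0 ≤ z i := by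
          intro i
          rw [hzi]
          by_cases h1 : i = u
          · rw [if_pos h1]; exact add_nonneg (hy u) (hy v)
          · rw [if_neg h1]
            by_cases h2 : i = v
            · rw [if_pos h2]
            · rw [if_neg h2]; exact hy i
        have hz_sum : ∑ i, z i = ∑ i, y i := by
          have hvmem' : v ∈ univ.erase u := Finset.mem_erase.2 ⟨fun h => huv h.symm, mem_univ v⟩
          rw [hz_def, Finset.sum_update_of_mem (mem_univ u), Finset.sdiff_singleton_eq_erase,
            Finset.sum_update_of_mem hvmem', Finset.sdiff_singleton_eq_erase,
            Finset.sum_erase_eq_sub hvmem', Finset.sum_erase_eq_sub (mem_univ u)]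
          ring
        have hz_supp : (univ.filter (fun i => z i ≠ 0)) ⊆
            (univ.filter (fun i => y i ≠ 0)).erase v := by
          intro i hi
          simp only [mem_filter, mem_univ, true_and] at hi
          rw [hzi] at hi
          by_cases h1 : i = u
          · subst h1
            exact Finset.mem_erase.2 ⟨huv, by simp [hyu]⟩
          · by_cases h2 : i = v
            · subst h2; simp [h1] at hi
            · rw [if_neg h1, if_neg h2] at hi
              exact Finset.mem_erase.2 ⟨h2, by simp [hi]⟩
        have hvmem : v ∈ univ.filter (fun i => y i ≠ 0) := by simp [hyv]
        have hcard' : (univ.filter (fun i => z i ≠ 0)).card ≤ k := by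
          have h1 := Finset.card_le_card hz_supp
          rw [Finset.card_erase_of_mem hvmem] at h1
          have h2 : 1 ≤ (univ.filter (fun i => y i ≠ 0)).card :=
            Finset.card_pos.2 ⟨v, hvmem⟩
          omega
        have hih := ih z hz_nonneg hcard'
        rw [hz_sum] at hih
        have hshift := Qf_shift G y huv hnadj
        rw [← hz_def] at hshift
        have hyv' : 0 ≤ y v := hy v
        nlinarith [mul_nonneg hyv' (sub_nonneg.2 hW)]
      rcases le_total (Wrow G y v) (Wrow G y u) with hW | hW
      · exact key u v huv hnadj hyu hyv hW
      · exact key v u (Ne.symm huv) (fun h => hnadj h.symm) hyv hyu hW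



lemma sum_update_two {n : ℕ} (f : Fin n → ℝ) {a b : Fin n} (hab : a ≠ b) (va vb : ℝ) :
    ∑ i, Function.update (Function.update f a va) b vb i
      = ∑ i, f i - f a - f b + va + vb := by
  have hamem : a ∈ univ.erase b := Finset.mem_erase.2 ⟨hab, mem_univ a⟩
  rw [Finset.sum_update_of_mem (mem_univ b), Finset.sdiff_singleton_eq_erase,
    Finset.sum_update_of_mem hamem, Finset.sdiff_singleton_eq_erase,
    Finset.sum_erase_eq_sub hamem, Finset.sum_erase_eq_sub (mem_univ b)]
  ring

lemma holder_sum {n : ℕ} (hn : 0 < n) {p : ℝ} (hp : 1 < p) (y : Fin n → ℝ)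
    (hy : ∀ i, 0 ≤ y i) :
    ∑ i, y i ≤ (n : ℝ) ^ (1 - 1/p) * (∑ i, y i ^ p) ^ (1/p) := by
  have hp0 : 0 < p := lt_trans one_pos hp
  have hn' : (0:ℝ) < n := by exact_mod_cast hn
  have hw' : ∑ _i : Fin n, (1 / (n:ℝ)) = 1 := by
    rw [Finset.sum_const, card_univ, Fintype.card_fin, nsmul_eq_mul]; field_simp
  have hmean := Real.rpow_arith_mean_le_arith_mean_rpow univ (fun _ => 1/(n:ℝ)) y
    (fun i _ => by positivity) hw' (fun i _ => hy i) hp.le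
  have hS : (0:ℝ) ≤ ∑ i, y i ^ p := Finset.sum_nonneg fun i _ => Real.rpow_nonneg (hy i) p
  have ha : (0:ℝ) ≤ ∑ i, 1/(n:ℝ) * y i :=
    Finset.sum_nonneg fun i _ => mul_nonneg (by positivity) (hy i)
  have h2 : ((∑ i, 1/(n:ℝ) * y i) ^ p) ^ (1/p) ≤ ((1/(n:ℝ)) * ∑ i, y i ^ p) ^ (1/p) := by
    apply Real.rpow_le_rpow (Real.rpow_nonneg ha p) ?_ (by positivity)
    calc (∑ i, 1/(n:ℝ) * y i) ^ p ≤ ∑ i, 1/(n:ℝ) * y i ^ p := hmean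
      _ = (1/(n:ℝ)) * ∑ i, y i ^ p := by rw [Finset.mul_sum]
  have h3 : ((∑ i, 1/(n:ℝ) * y i) ^ p) ^ (1/p) = ∑ i, 1/(n:ℝ) * y i := by
    rw [← Real.rpow_mul ha, mul_one_div_cancel hp0.ne', Real.rpow_one]
  have h4 : ∑ i, 1/(n:ℝ) * y i = (1/(n:ℝ)) * ∑ i, y i := by rw [Finset.mul_sum]
  have h5 : (1/(n:ℝ)) * ∑ i, y i ≤ ((1/(n:ℝ)) * ∑ i, y i ^ p) ^ (1/p) := by
    rw [← h4, ← h3]; exact h2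
  have h6 : ((1/(n:ℝ)) * ∑ i, y i ^ p) ^ (1/p)
      = ((n:ℝ) ^ (-(1/p))) * (∑ i, y i ^ p) ^ (1/p) := by
    rw [Real.mul_rpow (by positivity) hS, one_div, Real.inv_rpow hn'.le,
      ← Real.rpow_neg hn'.le, one_div]
  calc ∑ i, y i = (n:ℝ) * ((1/(n:ℝ)) * ∑ i, y i) := by field_simp
    _ ≤ (n:ℝ) * (((1/(n:ℝ)) * ∑ i, y i ^ p) ^ (1/p)) :=
        mul_le_mul_of_nonneg_left h5 hn'.le
    _ = (n:ℝ) ^ (1 - 1/p) * (∑ i, y i ^ p) ^ (1/p) := by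
        rw [h6, ← mul_assoc, sub_eq_add_neg, Real.rpow_add hn', Real.rpow_one]

lemma holder_eq {n : ℕ} (hn : 0 < n) {p : ℝ} (hp : 1 < p) (y : Fin n → ℝ)
    (hy : ∀ i, 0 ≤ y i) (h1 : ∑ i, y i ^ p = 1) (h2 : ∑ i, y i = (n:ℝ) ^ (1 - 1/p)) :
    ∀ i j, y i = y j := by
  have hp0 : 0 < p := lt_trans one_pos hp
  have hn' : (0:ℝ) < n := by exact_mod_cast hn
  by_contra h
  push_neg at h
  obtain ⟨a, b, hab⟩ := h
  have hne : a ≠ b := fun h' => hab (h' ▸ rfl)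
  set m := (y a + y b)/2 with hm
  set y' := Function.update (Function.update y a m) b m with hy'def
  have hy'_i : ∀ i, y' i = if i = b then m else if i = a then m else y i := by
    intro i
    by_cases h1' : i = b
    · subst h1'; rw [hy'def, Function.update_self, if_pos rfl]
    · rw [hy'def, Function.update_of_ne h1', if_neg h1']
      by_cases h2' : i = a
      · subst h2'; rw [Function.update_self, if_pos rfl]
      · rw [Function.update_of_ne h2', if_neg h2']
  have hy'_nonneg : ∀ i, 0 ≤ y' i := by
    intro i
    rw [hy'_i]
    have hm0 : 0 ≤ m := by rw [hm]; linarith [hy a, hy b]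
    by_cases h1' : i = b
    · rw [if_pos h1']; exact hm0
    · rw [if_neg h1']
      by_cases h2' : i = a
      · rw [if_pos h2']; exact hm0
      · rw [if_neg h2']; exact hy i
  have hsum' : ∑ i, y' i = ∑ i, y i := by
    rw [hy'def, sum_update_two y hne m m, hm]; ring
  have hfun : (fun i => y' i ^ p)
      = Function.update (Function.update (fun i => y i ^ p) a (m ^ p)) b (m ^ p) := by
    funext i
    by_cases h1' : i = b
    · subst h1'; rw [Function.update_self]
      rw [hy'_i, if_pos rfl]
    · rw [Function.update_of_ne h1']
      by_cases h2' : i = a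
      · subst h2'; rw [Function.update_self, hy'_i, if_neg h1', if_pos rfl]
      · rw [Function.update_of_ne h2', hy'_i, if_neg h1', if_neg h2']
  have hsump' : ∑ i, y' i ^ p = 1 - (y a ^ p + y b ^ p) + 2 * m ^ p := by
    calc ∑ i, y' i ^ p
        = ∑ i, Function.update (Function.update (fun i => y i ^ p) a (m ^ p)) b (m ^ p) i := by
          rw [← hfun]
      _ = (∑ i, y i ^ p) - y a ^ p - y b ^ p + m ^ p + m ^ p :=
          sum_update_two (fun i => y i ^ p) hne (m ^ p) (m ^ p)
      _ = 1 - (y a ^ p + y b ^ p) + 2 * m ^ p := by rw [h1]; ring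
  have hconv : m ^ p < (y a ^ p + y b ^ p) / 2 := by
    have hcc := (strictConvexOn_rpow hp).2 (Set.mem_Ici.2 (hy a)) (Set.mem_Ici.2 (hy b)) hab
      (by norm_num : (0:ℝ) < 1/2) (by norm_num : (0:ℝ) < 1/2) (by norm_num)
    simp only [smul_eq_mul] at hcc
    have hmeq : (1/2 : ℝ) * y a + (1/2) * y b = m := by rw [hm]; ring
    rw [hmeq] at hcc
    linarith
  have hsp : ∑ i, y' i ^ p < 1 := by rw [hsump']; linarith
  have hspn : (0:ℝ) ≤ ∑ i, y' i ^ p :=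
    Finset.sum_nonneg fun i _ => Real.rpow_nonneg (hy'_nonneg i) p
  have hlt : (∑ i, y' i ^ p) ^ (1/p) < 1 := Real.rpow_lt_one hspn hsp (by positivity)
  have hfinal : ∑ i, y' i < (n:ℝ) ^ (1 - 1/p) := by
    calc ∑ i, y' i ≤ (n:ℝ) ^ (1 - 1/p) * (∑ i, y' i ^ p) ^ (1/p) :=
          holder_sum hn hp y' hy'_nonneg
      _ < (n:ℝ) ^ (1 - 1/p) * 1 :=
          mul_lt_mul_of_pos_left hlt (Real.rpow_pos_of_pos hn' _)
      _ = (n:ℝ) ^ (1 - 1/p) := mul_one _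
  rw [hsum', h2] at hfinal
  exact lt_irrefl _ hfinal




lemma exists_max {n : ℕ} (hn : 0 < n) (G : SimpleGraph (Fin n)) {p : ℝ} (hp : 1 < p) :
    ∃ x : Fin n → ℝ, (∑ i, |x i| ^ p) = 1 ∧ pSpec G p = Qf G x := by
  classical
  have hp0 : 0 < p := lt_trans one_pos hp
  have hn' : (0:ℝ) < n := by exact_mod_cast hn
  set K : Set (Fin n → ℝ) := {x | ∑ i, |x i| ^ p = 1} with hK
  have hcont : Continuous fun x : Fin n → ℝ => ∑ i, |x i| ^ p := by
    apply continuous_finset_sum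
    intro i _
    have h1 : Continuous fun t : ℝ => t ^ p :=
      continuous_iff_continuousAt.2 fun x => Real.continuousAt_rpow_const x p (Or.inr hp0.le)
    exact h1.comp (continuous_apply i).abs
  have hK_closed : IsClosed K := by
    have : K = (fun x : Fin n → ℝ => ∑ i, |x i| ^ p) ⁻¹' {1} := by
      ext x; simp [hK]
    rw [this]
    exact isClosed_singleton.preimage hcont
  have hK_sub : K ⊆ Set.pi Set.univ (fun _ : Fin n => Set.Icc (-1:ℝ) 1) := by
    intro x hx i _
    have h1 : |x i| ^ p ≤ 1 := by
      rw [← hx]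
      exact Finset.single_le_sum (f := fun j => |x j| ^ p)
        (fun j _ => Real.rpow_nonneg (abs_nonneg _) p) (mem_univ i)
    have h2 : |x i| ≤ 1 := by
      by_contra hcon
      push_neg at hcon
      have := (Real.one_lt_rpow_iff_of_pos (lt_trans one_pos hcon)).2 (Or.inl ⟨hcon, hp0⟩)
      linarith
    exact Set.mem_Icc.2 (abs_le.1 h2)
  have hK_cpt : IsCompact K :=
    (isCompact_univ_pi fun _ => isCompact_Icc).of_isClosed_subset hK_closed hK_sub
  have hK_ne : K.Nonempty := by
    refine ⟨fun _ => (n:ℝ) ^ (-(1/p)), ?_⟩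
    have hc0 : (0:ℝ) ≤ (n:ℝ) ^ (-(1/p)) := Real.rpow_nonneg hn'.le _
    have habs : |(n:ℝ) ^ (-(1/p))| = (n:ℝ) ^ (-(1/p)) := abs_of_nonneg hc0
    simp only [hK, Set.mem_setOf_eq, habs]
    rw [Finset.sum_const, card_univ, Fintype.card_fin, nsmul_eq_mul,
      ← Real.rpow_mul hn'.le]
    have hexp : (-(1/p)) * p = -1 := by field_simp
    rw [hexp, Real.rpow_neg_one]
    field_simp
  have hQcont : Continuous (Qf G) := by
    apply continuous_finset_sum
    intro i _
    apply continuous_finset_sum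
    intro j _
    by_cases h : G.Adj i j
    · simp only [h, if_true]
      exact (continuous_apply i).mul (continuous_apply j)
    · simp only [h, if_false]
      exact continuous_const
  have himg : IsCompact (Qf G '' K) := hK_cpt.image hQcont
  have himg_ne : (Qf G '' K).Nonempty := hK_ne.image _
  have hset : {y : ℝ | ∃ x : Fin n → ℝ, (∑ i, |x i| ^ p) = 1 ∧
      y = ∑ i, ∑ j, if G.Adj i j then x i * x j else 0} = Qf G '' K := by
    ext t
    constructor
    · rintro ⟨x, h1, rfl⟩; exact ⟨x, h1, rfl⟩
    · rintro ⟨x, h1, rfl⟩; exact ⟨x, h1, rfl⟩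
  have hmem := himg.sSup_mem himg_ne
  rw [← hset] at hmem
  obtain ⟨x, hx1, hx2⟩ := hmem
  exact ⟨x, hx1, hx2⟩
  


lemma E2_eq {n : ℕ} (H : SimpleGraph (Fin n)) [DecidableRel H.Adj] :
    ∑ i, ∑ j, (if H.Adj i j then 1 else 0 : ℕ) = 2 * H.edgeFinset.card := by
  rw [← SimpleGraph.sum_degrees_eq_twice_card_edges]
  refine Finset.sum_congr rfl fun i _ => ?_
  rw [SimpleGraph.degree, SimpleGraph.neighborFinset_eq_filter, Finset.card_filter]

lemma A_sum {n r : ℕ} (hr : 0 < r) :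
    ∑ i ∈ range r, ((range n).filter (fun v => v % r = i)).card = n := by
  have h := Finset.card_eq_sum_card_fiberwise (f := fun v : ℕ => v % r) (s := range n)
    (t := range r) (fun v _ => Finset.mem_range.2 (Nat.mod_lt v hr))
  rw [Finset.card_range] at h
  exact h.symm

lemma pair_count {n r : ℕ} (hr : 0 < r) :
    ∑ v ∈ range n, ∑ w ∈ range n, (if v % r = w % r then 1 else 0 : ℕ)
      = ∑ i ∈ range r, (((range n).filter (fun v => v % r = i)).card) ^ 2 := by
  have inner : ∀ v, ∑ w ∈ range n, (if v % r = w % r then 1 else 0 : ℕ)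
      = ((range n).filter (fun w => w % r = v % r)).card := by
    intro v
    rw [Finset.card_filter]
    refine Finset.sum_congr rfl fun w _ => ?_
    by_cases h : v % r = w % r
    · rw [if_pos h, if_pos h.symm]
    · rw [if_neg h, if_neg (fun h' => h h'.symm)]
  rw [Finset.sum_congr rfl fun v _ => inner v]
  rw [← Finset.sum_fiberwise_of_maps_to (g := fun v : ℕ => v % r)
    (fun v _ => Finset.mem_range.2 (Nat.mod_lt v hr))
    (fun v => ((range n).filter (fun w => w % r = v % r)).card)]
  refine Finset.sum_congr rfl fun i _ => ?_
  have hstep : ∀ v ∈ (range n).filter (fun v => v % r = i),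
      ((range n).filter (fun w => w % r = v % r)).card
        = ((range n).filter (fun w => w % r = i)).card := by
    intro v hv
    rw [(Finset.mem_filter.1 hv).2]
  rw [Finset.sum_congr rfl hstep, Finset.sum_const, smul_eq_mul, sq]

lemma total_count {n r : ℕ} :
    (∑ v ∈ range n, ∑ w ∈ range n, (if v % r ≠ w % r then 1 else 0 : ℕ))
      + (∑ v ∈ range n, ∑ w ∈ range n, (if v % r = w % r then 1 else 0 : ℕ)) = n ^ 2 := by
  rw [← Finset.sum_add_distrib]
  have : ∀ v ∈ range n, (∑ w ∈ range n, (if v % r ≠ w % r then 1 else 0 : ℕ))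
      + (∑ w ∈ range n, (if v % r = w % r then 1 else 0 : ℕ)) = n := by
    intro v _
    rw [← Finset.sum_add_distrib]
    have h1 : ∀ w ∈ range n, (if v % r ≠ w % r then 1 else 0 : ℕ)
        + (if v % r = w % r then 1 else 0 : ℕ) = 1 := by
      intro w _
      by_cases h : v % r = w % r
      · rw [if_pos h, if_neg (by simpa using h)]
      · rw [if_neg h, if_pos h]
    rw [Finset.sum_congr rfl h1, Finset.sum_const, card_range, smul_eq_mul, mul_one]
  rw [Finset.sum_congr rfl this, Finset.sum_const, card_range, smul_eq_mul, sq]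

lemma E2_turan {n r : ℕ} :
    ∑ i, ∑ j, (if (SimpleGraph.turanGraph n r).Adj i j then 1 else 0 : ℕ)
      = ∑ v ∈ range n, ∑ w ∈ range n, (if v % r ≠ w % r then 1 else 0 : ℕ) := by
  have h1 : ∀ v : Fin n, ∑ j, (if (SimpleGraph.turanGraph n r).Adj v j then 1 else 0 : ℕ)
      = ∑ w ∈ range n, (if (v : ℕ) % r ≠ w % r then 1 else 0 : ℕ) := by
    intro v
    rw [← Fin.sum_univ_eq_sum_range (fun w => if (v : ℕ) % r ≠ w % r then 1 else 0) n]
    refine Finset.sum_congr rfl fun w _ => ?_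
    by_cases h : (v : ℕ) % r ≠ (w : ℕ) % r
    · rw [if_pos h, if_pos (show (SimpleGraph.turanGraph n r).Adj v w from h)]
    · rw [if_neg h, if_neg (show ¬ (SimpleGraph.turanGraph n r).Adj v w from h)]
  rw [Finset.sum_congr rfl fun v _ => h1 v,
    ← Fin.sum_univ_eq_sum_range
      (fun v => ∑ w ∈ range n, (if v % r ≠ w % r then 1 else 0 : ℕ)) n]

def turan_iso_cast {N n r : ℕ} (h : N = n) :
    SimpleGraph.turanGraph N r ≃g SimpleGraph.turanGraph n r := by
  subst h
  exact ⟨Equiv.refl _, fun {a b} => Iff.rfl⟩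

end Stmt8Aux

theorem stmt8 {n : ℕ} (r : ℕ) (hr : 2 ≤ r) (p : ℝ) (hp : 1 < p)
    (G : SimpleGraph (Fin n)) (hG : G.CliqueFree (r + 1))
    (heq : pSpec G p = (1 - 1 / (r : ℝ)) * (n : ℝ) ^ (2 - 2 / p)) :
    r ∣ n ∧ Nonempty (G ≃g SimpleGraph.turanGraph n r) := by
  classical
  open Stmt8Aux in
  rcases Nat.eq_zero_or_pos n with hn | hn
  · subst hn
    exact ⟨dvd_zero r, ⟨⟨Equiv.refl (Fin 0), fun {a b} => a.elim0⟩⟩⟩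
  · have hr0 : 0 < r := by omega
    have hp0 : 0 < p := lt_trans one_pos hp
    have hn' : (0 : ℝ) < n := by exact_mod_cast hn
    have hr2 : (2 : ℝ) ≤ r := by exact_mod_cast hr
    have hrpos : (0 : ℝ) < r := by linarith
    have hrR : (0 : ℝ) < 1 - 1 / (r : ℝ) := by
      rw [sub_pos, div_lt_one hrpos]; linarith
    obtain ⟨x, hx1, hx2⟩ := Stmt8Aux.exists_max hn G hp
    set y : Fin n → ℝ := fun i => |x i| with hy_def
    have hy0 : ∀ i, 0 ≤ y i := fun i => abs_nonneg _
    have hyp : ∑ i, y i ^ p = 1 := hx1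
    have hQxy : Qf G x ≤ Qf G y := by
      refine Finset.sum_le_sum fun i _ => Finset.sum_le_sum fun j _ => ?_
      by_cases h : G.Adj i j
      · rw [if_pos h, if_pos h]
        calc x i * x j ≤ |x i * x j| := le_abs_self _
          _ = y i * y j := abs_mul _ _
      · rw [if_neg h, if_neg h]
    have hMS : Qf G y ≤ (1 - 1 / (r : ℝ)) * (∑ i, y i) ^ 2 := ms hr0 hG y hy0
    have hH : ∑ i, y i ≤ (n : ℝ) ^ (1 - 1 / p) := by
      have h := holder_sum hn hp y hy0
      rw [hyp, Real.one_rpow, mul_one] at h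
      exact h
    have hQx : Qf G x = (1 - 1 / (r : ℝ)) * (n : ℝ) ^ (2 - 2 / p) := by
      rw [← hx2]; exact heq
    have hkey : (n : ℝ) ^ (2 - 2 / p) = ((n : ℝ) ^ (1 - 1 / p)) ^ 2 := by
      rw [← Real.rpow_natCast ((n : ℝ) ^ (1 - 1 / p)) 2, ← Real.rpow_mul hn'.le]
      congr 1
      push_cast
      ring
    have hsum_nonneg : (0 : ℝ) ≤ ∑ i, y i := Finset.sum_nonneg fun i _ => hy0 i
    have hsum_ge : (n : ℝ) ^ (1 - 1 / p) ≤ ∑ i, y i := by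
      have h1 : (1 - 1 / (r : ℝ)) * ((n : ℝ) ^ (1 - 1 / p)) ^ 2
          ≤ (1 - 1 / (r : ℝ)) * (∑ i, y i) ^ 2 := by
        rw [← hkey]
        linarith [hQx, hQxy, hMS]
      have h2 : ((n : ℝ) ^ (1 - 1 / p)) ^ 2 ≤ (∑ i, y i) ^ 2 :=
        le_of_mul_le_mul_left h1 hrR
      nlinarith [Real.rpow_nonneg hn'.le (1 - 1 / p), hsum_nonneg]
    have hsum_eq : ∑ i, y i = (n : ℝ) ^ (1 - 1 / p) := le_antisymm hH hsum_ge
    have hall := holder_eq hn hp y hy0 hyp hsum_eq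
    set c : ℝ := y ⟨0, hn⟩ with hc_def
    have hci : ∀ i, y i = c := fun i => hall i _
    have hc0 : 0 ≤ c := hy0 _
    have hcp : (n : ℝ) * c ^ p = 1 := by
      have h : ∑ i, y i ^ p = (n : ℝ) * c ^ p := by
        rw [Finset.sum_congr rfl fun i _ => by rw [hci i], Finset.sum_const, card_univ,
          Fintype.card_fin, nsmul_eq_mul]
      rw [← h, hyp]
    have hc_eq : c = (n : ℝ) ^ (-(1 / p)) := by
      have hcpv : c ^ p = ((n : ℝ))⁻¹ := by
        rw [inv_eq_one_div, eq_div_iff hn'.ne']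
        linarith [hcp]
      calc c = (c ^ p) ^ (1 / p) := by
            rw [← Real.rpow_mul hc0, mul_one_div_cancel hp0.ne', Real.rpow_one]
        _ = ((n : ℝ)⁻¹) ^ (1 / p) := by rw [hcpv]
        _ = (n : ℝ) ^ (-(1 / p)) := by
            rw [Real.inv_rpow hn'.le, ← Real.rpow_neg hn'.le]
    have hQy_eq : Qf G y = (1 - 1 / (r : ℝ)) * (n : ℝ) ^ (2 - 2 / p) := by
      have hub : Qf G y ≤ (1 - 1 / (r : ℝ)) * (n : ℝ) ^ (2 - 2 / p) := by
        rw [hkey, ← hsum_eq]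
        exact hMS
      linarith [hQxy, hQx]
    set E2 : ℕ := ∑ i, ∑ j, if G.Adj i j then 1 else 0 with hE2
    have hQyc : Qf G y = (E2 : ℝ) * c ^ 2 := by
      have hterm : ∀ i j : Fin n, (if G.Adj i j then y i * y j else 0)
          = (if G.Adj i j then (1 : ℝ) else 0) * c ^ 2 := by
        intro i j
        by_cases h : G.Adj i j
        · rw [if_pos h, if_pos h, hci i, hci j]; ring
        · rw [if_neg h, if_neg h, zero_mul]
      have hcast : (E2 : ℝ) = ∑ i, ∑ j, (if G.Adj i j then (1 : ℝ) else 0) := by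
        rw [hE2]; push_cast; rfl
      calc Qf G y = ∑ i, ∑ j, (if G.Adj i j then (1 : ℝ) else 0) * c ^ 2 := by
            exact Finset.sum_congr rfl fun i _ => Finset.sum_congr rfl fun j _ => hterm i j
        _ = (∑ i, ∑ j, (if G.Adj i j then (1 : ℝ) else 0)) * c ^ 2 := by
            rw [Finset.sum_mul]
            exact Finset.sum_congr rfl fun i _ => by rw [Finset.sum_mul]
        _ = (E2 : ℝ) * c ^ 2 := by rw [hcast]
    have hc2 : c ^ 2 = (n : ℝ) ^ (-(2 / p)) := by
      rw [hc_eq, ← Real.rpow_natCast ((n : ℝ) ^ (-(1 / p))) 2, ← Real.rpow_mul hn'.le]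
      congr 1
      push_cast
      ring
    have hE2val : (E2 : ℝ) = (1 - 1 / (r : ℝ)) * (n : ℝ) ^ 2 := by
      have h1 : (E2 : ℝ) * (n : ℝ) ^ (-(2 / p)) = (1 - 1 / (r : ℝ)) * (n : ℝ) ^ (2 - 2 / p) := by
        rw [← hc2, ← hQyc, hQy_eq]
      have h2 : (n : ℝ) ^ (2 - 2 / p) = (n : ℝ) ^ (2 : ℕ) * (n : ℝ) ^ (-(2 / p)) := by
        have hexp : (2 : ℝ) - 2 / p = ((2 : ℕ) : ℝ) + (-(2 / p)) := by push_cast; ring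
        rw [hexp, Real.rpow_add hn', Real.rpow_natCast]
      have hpos : (0 : ℝ) < (n : ℝ) ^ (-(2 / p)) := Real.rpow_pos_of_pos hn' _
      have h3 : (E2 : ℝ) * (n : ℝ) ^ (-(2 / p))
          = ((1 - 1 / (r : ℝ)) * (n : ℝ) ^ (2 : ℕ)) * (n : ℝ) ^ (-(2 / p)) := by
        rw [h1, h2]; ring
      have h4 := mul_right_cancel₀ hpos.ne' h3
      rw [h4]
    have hTM : G.IsTuranMaximal r := by
      refine ⟨hG, fun H _ hHcf => ?_⟩
      have hmsH := ms hr0 hHcf (fun _ => (1 : ℝ)) (fun _ => zero_le_one)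
      have hone : (∑ _i : Fin n, (1 : ℝ)) = n := by
        rw [Finset.sum_const, card_univ, Fintype.card_fin, nsmul_eq_mul, mul_one]
      rw [hone] at hmsH
      have hQH : Qf H (fun _ => 1)
          = ((∑ i, ∑ j, if H.Adj i j then 1 else 0 : ℕ) : ℝ) := by
        rw [Qf]; push_cast
        refine Finset.sum_congr rfl fun i _ => Finset.sum_congr rfl fun j _ => ?_
        by_cases h : H.Adj i j
        · rw [if_pos h, if_pos h, mul_one]
        · rw [if_neg h, if_neg h]
      rw [hQH] at hmsH
      have h3 : ((∑ i, ∑ j, if H.Adj i j then 1 else 0 : ℕ) : ℝ) ≤ (E2 : ℝ) := by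
        rw [hE2val]
        calc ((∑ i, ∑ j, if H.Adj i j then 1 else 0 : ℕ) : ℝ)
            ≤ (1 - 1 / (r : ℝ)) * (n : ℝ) ^ 2 := hmsH
          _ = (1 - 1 / (r : ℝ)) * (n : ℝ) ^ 2 := rfl
      have h4 : (∑ i, ∑ j, if H.Adj i j then 1 else 0 : ℕ) ≤ E2 := by exact_mod_cast h3
      rw [E2_eq H] at h4
      rw [hE2, E2_eq G] at h4
      omega
    have hiso0 := (SimpleGraph.isTuranMaximal_iff_nonempty_iso_turanGraph hr0).1 hTM
    have hiso : Nonempty (G ≃g SimpleGraph.turanGraph n r) :=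
      hiso0.map fun f => f.trans (turan_iso_cast (Fintype.card_fin n))
    refine ⟨?_, hiso⟩
    obtain ⟨f⟩ := hiso
    have hedge : G.edgeFinset.card = (SimpleGraph.turanGraph n r).edgeFinset.card :=
      f.card_edgeFinset_eq
    set A : ℕ → ℕ := fun i => ((range n).filter (fun v => v % r = i)).card with hA
    have hGE2T : E2 = ∑ v ∈ range n, ∑ w ∈ range n, (if v % r ≠ w % r then 1 else 0 : ℕ) := by
      rw [hE2, E2_eq G, hedge, ← E2_eq (SimpleGraph.turanGraph n r), E2_turan]
    have hfinal_nat : E2 + ∑ i ∈ range r, A i ^ 2 = n ^ 2 := by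
      rw [hGE2T, ← pair_count hr0]
      exact total_count
    have hcastS : (E2 : ℝ) + ((∑ i ∈ range r, A i ^ 2 : ℕ) : ℝ) = (n : ℝ) ^ 2 := by
      exact_mod_cast congrArg (Nat.cast : ℕ → ℝ) hfinal_nat
    have hSr : ((∑ i ∈ range r, A i ^ 2 : ℕ) : ℝ) * r = (n : ℝ) ^ 2 := by
      rw [hE2val] at hcastS
      have h8 : ((∑ i ∈ range r, A i ^ 2 : ℕ) : ℝ)
          = (n : ℝ) ^ 2 - (1 - 1 / (r : ℝ)) * (n : ℝ) ^ 2 := by linarith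
      rw [h8]
      field_simp
      ring
    have hAsum : ∑ i ∈ range r, A i = n := A_sum hr0
    have hsq : (((range r).card : ℕ) : ℝ) * ∑ i ∈ range r, ((A i : ℝ)) ^ 2
        = (∑ i ∈ range r, ((A i : ℝ))) ^ 2 := by
      rw [card_range]
      have hl : ∑ i ∈ range r, ((A i : ℝ)) ^ 2 = ((∑ i ∈ range r, A i ^ 2 : ℕ) : ℝ) := by
        push_cast; rfl
      have hrr : ∑ i ∈ range r, ((A i : ℝ)) = ((n : ℕ) : ℝ) := by
        rw [← hAsum]; push_cast; rfl
      rw [hl, hrr, ← hSr]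
      ring
    have hAeq := all_eq_of_sq (range r) (fun i => (A i : ℝ)) hsq
    have hA0 : ∀ i ∈ range r, A i = A 0 := by
      intro i hi
      have h := hAeq i hi 0 (Finset.mem_range.2 hr0)
      have h' : ((A i : ℕ) : ℝ) = ((A 0 : ℕ) : ℝ) := h
      exact_mod_cast h'
    have hn_eq : n = r * A 0 := by
      rw [← hAsum, Finset.sum_congr rfl hA0, Finset.sum_const, card_range, smul_eq_mul]
    exact ⟨A 0, hn_eq⟩
end

section
/- For every p > 1 and n ≥ r ≥ 2, (1 - 1/r) n^2 - r/4 ≤ λ^(p)(T_r(n)) n^(2/p) ≤ (1 - 1/r) n^2. -/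
open Finset

open scoped Classical

noncomputable def Tfib (r n : ℕ) (x : Fin n → ℝ) (k : ℕ) : ℝ :=
  ∑ i ∈ Finset.univ.filter (fun i : Fin n => (i : ℕ) % r = k), x i

lemma turan_quad (r n : ℕ) (hr0 : 0 < r) (x : Fin n → ℝ) :
    (∑ i, ∑ j, if (SimpleGraph.turanGraph n r).Adj i j then x i * x j else 0)
      = (∑ k ∈ Finset.range r, Tfib r n x k) ^ 2
        - ∑ k ∈ Finset.range r, (Tfib r n x k) ^ 2 := by
  have hmaps : ∀ i : Fin n, i ∈ (univ : Finset (Fin n)) → (i : ℕ) % r ∈ range r :=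
    fun i _ => mem_range.mpr (Nat.mod_lt _ hr0)
  have hS : ∑ i, x i = ∑ k ∈ range r, Tfib r n x k :=
    (sum_fiberwise_of_maps_to hmaps x).symm
  have hinner : ∀ i : Fin n,
      (∑ j : Fin n, if (i : ℕ) % r = (j : ℕ) % r then x i * x j else 0)
        = x i * Tfib r n x ((i : ℕ) % r) := by
    intro i
    rw [Tfib, ← sum_filter, mul_sum]
    apply sum_congr
    · ext j; simp [eq_comm]
    · intros; rfl
  have hD : (∑ i : Fin n, ∑ j : Fin n, if (i : ℕ) % r = (j : ℕ) % r then x i * x j else 0)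
      = ∑ k ∈ range r, (Tfib r n x k) ^ 2 := by
    simp_rw [hinner]
    rw [← sum_fiberwise_of_maps_to hmaps (fun i => x i * Tfib r n x ((i : ℕ) % r))]
    apply sum_congr rfl
    intro k hk
    have : ∀ i ∈ univ.filter (fun i : Fin n => (i : ℕ) % r = k),
        x i * Tfib r n x ((i : ℕ) % r) = x i * Tfib r n x k := by
      intro i hi
      rw [(mem_filter.mp hi).2]
    rw [sum_congr rfl this, ← sum_mul]
    rw [← Tfib, sq]
  have hsplit : ∀ i j : Fin n,
      (if (SimpleGraph.turanGraph n r).Adj i j then x i * x j else 0)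
        = x i * x j - (if (i : ℕ) % r = (j : ℕ) % r then x i * x j else 0) := by
    intro i j
    by_cases h : (i : ℕ) % r = (j : ℕ) % r <;> simp [SimpleGraph.turanGraph, h]
  simp_rw [hsplit, Finset.sum_sub_distrib]
  rw [hD, sub_left_inj, ← hS, sq, Finset.sum_mul_sum]

lemma cfib_eq (r n k : ℕ) (hr0 : 0 < r) (hk : k < r) :
    (Finset.univ.filter (fun i : Fin n => (i : ℕ) % r = k)).card
      = n / r + if k < n % r then 1 else 0 := by
  have h1 : (Finset.univ.filter (fun i : Fin n => (i : ℕ) % r = k)).card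
      = ((Finset.range n).filter (fun i => i % r = k)).card := by
    rw [Finset.card_filter, Finset.card_filter]
    exact Fin.sum_univ_eq_sum_range (fun i => if i % r = k then 1 else 0) n
  have h2 := Nat.count_modEq_card n hr0 k
  rw [Nat.count_eq_card_filter_range, Nat.mod_eq_of_lt hk] at h2
  rw [h1, ← h2]
  congr 1
  ext i
  simp [Nat.ModEq, Nat.mod_eq_of_lt hk]

lemma csum (r n : ℕ) (hr0 : 0 < r) :
    ∑ k ∈ Finset.range r, (Finset.univ.filter (fun i : Fin n => (i : ℕ) % r = k)).card = n := by
  have hmaps : ∀ i : Fin n, i ∈ (univ : Finset (Fin n)) → (i : ℕ) % r ∈ range r :=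
    fun i _ => mem_range.mpr (Nat.mod_lt _ hr0)
  have := Finset.sum_fiberwise_of_maps_to hmaps (fun _ : Fin n => (1 : ℕ))
  simp only [Finset.card_eq_sum_ones]
  rw [this]
  simp

lemma csq (r n : ℕ) (hr : 2 ≤ r) (hn : r ≤ n) :
    (∑ k ∈ Finset.range r,
      ((Finset.univ.filter (fun i : Fin n => (i : ℕ) % r = k)).card : ℝ) ^ 2)
      ≤ (n : ℝ) ^ 2 / r + r / 4 := by
  have hr0 : 0 < r := by omega
  set q := n / r with hq
  set s := n % r with hs
  have hmod : r * q + s = n := Nat.div_add_mod n r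
  have hslt : s < r := Nat.mod_lt _ hr0
  have hterm : ∀ k ∈ Finset.range r,
      ((Finset.univ.filter (fun i : Fin n => (i : ℕ) % r = k)).card : ℝ) ^ 2
        = (2 * q + 1) * ((Finset.univ.filter (fun i : Fin n => (i : ℕ) % r = k)).card : ℝ)
          - q * (q + 1) := by
    intro k hk
    have hc := cfib_eq r n k hr0 (Finset.mem_range.mp hk)
    rw [hc]
    split <;> push_cast <;> ring
  rw [Finset.sum_congr rfl hterm, Finset.sum_sub_distrib, ← Finset.mul_sum, Finset.sum_const,
    Finset.card_range, ← Nat.cast_sum, csum r n hr0]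
  have hrR : (0:ℝ) < r := by positivity
  have hnR : (n:ℝ) = r * q + s := by exact_mod_cast hmod.symm
  have hsR : (s:ℝ) < r := by exact_mod_cast hslt
  have hsnn : (0:ℝ) ≤ s := Nat.cast_nonneg s
  rw [div_add_div _ _ (ne_of_gt hrR) (by norm_num : (4:ℝ) ≠ 0), le_div_iff₀ (by positivity),
    nsmul_eq_mul, hnR]
  nlinarith [sq_nonneg (2 * (s:ℝ) - r)]

theorem stmt11 (r n : ℕ) (hr : 2 ≤ r) (hn : r ≤ n) (p : ℝ) (hp : 1 < p) :
    (1 - 1 / (r : ℝ)) * (n : ℝ) ^ 2 - (r : ℝ) / 4 ≤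
        pSpec (SimpleGraph.turanGraph n r) p * (n : ℝ) ^ (2 / p) ∧
      pSpec (SimpleGraph.turanGraph n r) p * (n : ℝ) ^ (2 / p) ≤
        (1 - 1 / (r : ℝ)) * (n : ℝ) ^ 2 := by
  have hr0 : 0 < r := by omega
  have hn0 : 0 < n := by omega
  have hnR : (0:ℝ) < n := by exact_mod_cast hn0
  have hrR : (0:ℝ) < r := by exact_mod_cast hr0
  have hp0 : (0:ℝ) < p := by linarith
  have hfrac : (0:ℝ) ≤ 1 - 1 / (r:ℝ) := by
    rw [sub_nonneg, div_le_one hrR]; exact_mod_cast hr0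
  set S : Set ℝ := {y : ℝ | ∃ x : Fin n → ℝ, (∑ i, |x i| ^ p) = 1 ∧
    y = ∑ i, ∑ j, if (SimpleGraph.turanGraph n r).Adj i j then x i * x j else 0} with hSdef
  -- upper bound on every element of S
  have hub : ∀ y ∈ S, y ≤ (1 - 1 / (r:ℝ)) * (n:ℝ) ^ (2 - 2 / p) := by
    rintro y ⟨x, hx, rfl⟩
    rw [turan_quad r n (by omega) x]
    set T := fun k => Tfib r n x k with hT
    have hCS : (∑ k ∈ range r, T k) ^ 2 ≤ r * ∑ k ∈ range r, (T k) ^ 2 := by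
      have := sq_sum_le_card_mul_sum_sq (s := range r) (f := T)
      simpa using this
    have step1 : (∑ k ∈ range r, T k) ^ 2 - ∑ k ∈ range r, (T k) ^ 2
        ≤ (1 - 1 / (r:ℝ)) * (∑ k ∈ range r, T k) ^ 2 := by
      have h1 : (∑ k ∈ range r, T k) ^ 2 / r ≤ ∑ k ∈ range r, (T k) ^ 2 := by
        rw [div_le_iff₀ hrR]; linarith [hCS]
      have : (1 - 1 / (r:ℝ)) * (∑ k ∈ range r, T k) ^ 2
          = (∑ k ∈ range r, T k) ^ 2 - (∑ k ∈ range r, T k) ^ 2 / r := by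
        field_simp
      rw [this]; linarith
    -- relate (∑ T) to ∑ x and bound by Hölder
    have hST : ∑ k ∈ range r, T k = ∑ i, x i := by
      have hmaps : ∀ i : Fin n, i ∈ (univ : Finset (Fin n)) → (i : ℕ) % r ∈ range r :=
        fun i _ => mem_range.mpr (Nat.mod_lt _ hr0)
      exact sum_fiberwise_of_maps_to hmaps x
    have hA : (∑ i, |x i|) ^ p ≤ (n:ℝ) ^ (p - 1) := by
      have := Real.rpow_sum_le_const_mul_sum_rpow univ x (le_of_lt hp)
      simpa [hx] using this
    have hAnn : (0:ℝ) ≤ ∑ i, |x i| := Finset.sum_nonneg fun i _ => abs_nonneg _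
    have hA1 : (∑ i, |x i|) ≤ (n:ℝ) ^ ((p-1) * (1/p)) := by
      have h2 : ((∑ i, |x i|) ^ p) ^ (1/p) ≤ ((n:ℝ) ^ (p-1)) ^ (1/p) :=
        Real.rpow_le_rpow (Real.rpow_nonneg hAnn p) hA (by positivity)
      rwa [← Real.rpow_mul hnR.le, ← Real.rpow_mul hAnn, mul_one_div,
        div_self (ne_of_gt hp0), Real.rpow_one] at h2
    have hA2 : (∑ i, |x i|) ^ 2 ≤ (n:ℝ) ^ (2 - 2/p) := by
      calc (∑ i, |x i|) ^ 2 ≤ ((n:ℝ) ^ ((p-1) * (1/p))) ^ 2 := by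
            exact pow_le_pow_left₀ hAnn hA1 2
        _ = (n:ℝ) ^ (2 - 2/p) := by
            rw [← Real.rpow_natCast ((n:ℝ) ^ ((p-1) * (1/p))) 2, ← Real.rpow_mul hnR.le]
            congr 1
            push_cast
            field_simp
    have hS2 : (∑ k ∈ range r, T k) ^ 2 ≤ (n:ℝ) ^ (2 - 2/p) := by
      rw [hST]
      calc (∑ i, x i) ^ 2 ≤ (∑ i, |x i|) ^ 2 := by
            rw [← sq_abs]
            exact pow_le_pow_left₀ (abs_nonneg _) (Finset.abs_sum_le_sum_abs _ _) 2
        _ ≤ _ := hA2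
    calc _ ≤ (1 - 1 / (r:ℝ)) * (∑ k ∈ range r, T k) ^ 2 := step1
      _ ≤ (1 - 1 / (r:ℝ)) * (n:ℝ) ^ (2 - 2/p) := by
          exact mul_le_mul_of_nonneg_left hS2 hfrac
  have hbdd : BddAbove S := ⟨(1 - 1 / (r:ℝ)) * (n:ℝ) ^ (2 - 2 / p), fun y hy => hub y hy⟩
  -- the uniform vector
  set a : ℝ := (n:ℝ) ^ (-(1/p)) with ha
  have hapos : 0 < a := Real.rpow_pos_of_pos hnR _
  have hxc : (∑ i : Fin n, |(fun _ : Fin n => a) i| ^ p) = 1 := by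
    simp only [abs_of_pos hapos, Finset.sum_const, Finset.card_univ, Fintype.card_fin,
      nsmul_eq_mul]
    rw [ha, ← Real.rpow_mul hnR.le]
    rw [neg_mul, one_div, inv_mul_cancel₀ (ne_of_gt hp0)]
    rw [Real.rpow_neg_one]
    field_simp
  set c : ℕ → ℕ := fun k => (Finset.univ.filter (fun i : Fin n => (i : ℕ) % r = k)).card with hc
  have hTa : ∀ k, Tfib r n (fun _ => a) k = (c k : ℝ) * a := by
    intro k
    rw [Tfib, Finset.sum_const, nsmul_eq_mul, hc]
  have hy0 : (∑ i, ∑ j, if (SimpleGraph.turanGraph n r).Adj i j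
        then (fun _ : Fin n => a) i * (fun _ : Fin n => a) j else 0)
      = a ^ 2 * ((n:ℝ)^2 - ∑ k ∈ range r, (c k : ℝ)^2) := by
    rw [turan_quad r n (by omega)]
    simp only [hTa]
    rw [← Finset.sum_mul]
    have : ∑ k ∈ range r, (c k : ℝ) = n := by
      rw [← Nat.cast_sum]
      exact_mod_cast congrArg (Nat.cast (R := ℝ)) (csum r n hr0)
    rw [this]
    rw [Finset.sum_congr rfl (fun k _ => by ring :
      ∀ k ∈ range r, ((c k : ℝ) * a) ^ 2 = (c k : ℝ)^2 * a^2), ← Finset.sum_mul]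
    ring
  have hmem : a ^ 2 * ((n:ℝ)^2 - ∑ k ∈ range r, (c k : ℝ)^2) ∈ S :=
    ⟨fun _ => a, hxc, hy0.symm⟩
  have hpS : pSpec (SimpleGraph.turanGraph n r) p = sSup S := by rw [pSpec, hSdef]; congr!
  have hlow : a ^ 2 * ((n:ℝ)^2 - ∑ k ∈ range r, (c k : ℝ)^2)
      ≤ pSpec (SimpleGraph.turanGraph n r) p := by
    rw [hpS]; exact le_csSup hbdd hmem
  have ha2 : a ^ 2 = (n:ℝ) ^ (-(2/p)) := by
    rw [ha, ← Real.rpow_natCast ((n:ℝ) ^ (-(1/p))) 2, ← Real.rpow_mul hnR.le]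
    norm_num
    congr 1
    ring
  have hcancel : (n:ℝ) ^ (-(2/p)) * (n:ℝ) ^ (2/p) = 1 := by
    rw [← Real.rpow_add hnR]; simp
  have hE : (1 - 1 / (r:ℝ)) * (n:ℝ)^2 - (r:ℝ)/4 ≤ (n:ℝ)^2 - ∑ k ∈ range r, (c k : ℝ)^2 := by
    have h1 : (1 - 1 / (r:ℝ)) * (n:ℝ)^2 = (n:ℝ)^2 - (n:ℝ)^2 / r := by field_simp
    rw [h1]
    linarith [csq r n hr hn]
  have hrpowpos : (0:ℝ) < (n:ℝ) ^ (2/p) := Real.rpow_pos_of_pos hnR _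
  constructor
  · calc (1 - 1 / (r : ℝ)) * (n : ℝ) ^ 2 - (r : ℝ) / 4
        ≤ (n:ℝ)^2 - ∑ k ∈ range r, (c k : ℝ)^2 := hE
      _ = a ^ 2 * ((n:ℝ)^2 - ∑ k ∈ range r, (c k : ℝ)^2) * (n:ℝ) ^ (2/p) := by
          rw [ha2, mul_comm ((n:ℝ) ^ (-(2/p))) _, mul_assoc, hcancel, mul_one]
      _ ≤ pSpec (SimpleGraph.turanGraph n r) p * (n : ℝ) ^ (2 / p) := by
          exact mul_le_mul_of_nonneg_right hlow hrpowpos.le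
  · have hup : pSpec (SimpleGraph.turanGraph n r) p ≤ (1 - 1 / (r:ℝ)) * (n:ℝ) ^ (2 - 2 / p) := by
      rw [hpS]; exact csSup_le ⟨_, hmem⟩ hub
    calc pSpec (SimpleGraph.turanGraph n r) p * (n : ℝ) ^ (2 / p)
        ≤ (1 - 1 / (r:ℝ)) * (n:ℝ) ^ (2 - 2 / p) * (n : ℝ) ^ (2 / p) := by
          exact mul_le_mul_of_nonneg_right hup hrpowpos.le
      _ = (1 - 1 / (r : ℝ)) * (n : ℝ) ^ 2 := by
          rw [mul_assoc, ← Real.rpow_add hnR, ← Real.rpow_natCast ((n:ℝ)) 2]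
          norm_num
end

section
/- Let p ≥ 1, let G be a K_{r+1}-free graph on vertex set V, let x : V → ℝ_{≥0}, and for v ∈ V set D_G(v,x) = ∑_{i ∈ Γ_G(v)} x_i. Then there exists a complete r-partite graph H with V(H) = V such that D_H(v,x) ≥ D_G(v,x) for every v ∈ V. -/
open Finset

open scoped Classical

lemma aux13 {V : Type*} [Fintype V] [DecidableEq V] (G : SimpleGraph V) [DecidableRel G.Adj]
    (x : V → ℝ) (hx : ∀ v, 0 ≤ x v) :
    ∀ n : ℕ, ∀ S : Finset V, (∀ K ⊆ S, ¬ G.IsNClique (n + 2) K) →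
    ∃ f : V → Fin (n + 1), ∀ v ∈ S,
      ∑ i ∈ G.neighborFinset v ∩ S, x i ≤ ∑ i ∈ S.filter (fun i => f i ≠ f v), x i := by
  intro n
  induction n with
  | zero =>
    intro S hS
    refine ⟨fun _ => 0, fun v hv => ?_⟩
    have h1 : G.neighborFinset v ∩ S = ∅ := by
      rw [Finset.eq_empty_iff_forall_notMem]
      intro i hi
      simp only [Finset.mem_inter, SimpleGraph.mem_neighborFinset] at hi
      have hvi : v ≠ i := G.ne_of_adj hi.1
      refine hS {v, i} ?_ ?_
      · intro a ha
        rcases Finset.mem_insert.1 ha with rfl | ha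
        · exact hv
        · rw [Finset.mem_singleton] at ha; subst ha; exact hi.2
      · constructor
        · intro a ha b hb hab
          simp only [Finset.coe_insert, Finset.coe_singleton, Set.mem_insert_iff,
            Set.mem_singleton_iff] at ha hb
          rcases ha with rfl | rfl <;> rcases hb with rfl | rfl <;>
            first | exact absurd rfl hab | exact hi.1 | exact hi.1.symm
        · rw [Finset.card_insert_of_notMem (by simpa using hvi), Finset.card_singleton]
    rw [h1]
    simp only [Finset.sum_empty]
    exact Finset.sum_nonneg fun i _ => hx i
  | succ n ih =>
    intro S hS
    rcases S.eq_empty_or_nonempty with rfl | hSne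
    · exact ⟨fun _ => 0, by simp⟩
    obtain ⟨u, huS, hmax⟩ := S.exists_max_image (fun v => ∑ i ∈ G.neighborFinset v ∩ S, x i) hSne
    set T := G.neighborFinset u ∩ S with hT
    have hTS : T ⊆ S := Finset.inter_subset_right
    have hT' : ∀ K ⊆ T, ¬ G.IsNClique (n + 2) K := by
      intro K hK hcl
      refine hS (insert u K) (Finset.insert_subset huS (hK.trans hTS)) ?_
      have : G.IsNClique (n + 2 + 1) (insert u K) := by
        refine hcl.insert ?_
        intro b hb
        have := hK hb
        rw [hT, Finset.mem_inter, SimpleGraph.mem_neighborFinset] at this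
        exact this.1
      convert this using 1
    obtain ⟨f', hf'⟩ := ih T hT'
    refine ⟨fun v => if v ∈ T then (f' v).succ else 0, fun v hv => ?_⟩
    by_cases hvT : v ∈ T
    · have hset : S.filter (fun i => (if i ∈ T then (f' i).succ else 0) ≠
          (if v ∈ T then (f' v).succ else (0 : Fin (n + 2))))
          = (S \ T) ∪ T.filter (fun i => f' i ≠ f' v) := by
        ext i
        simp only [Finset.mem_filter, Finset.mem_union, Finset.mem_sdiff, hvT, if_pos]
        by_cases hiT : i ∈ T
        · simp [hiT, Fin.succ_inj, hTS hiT]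
        · simp [hiT, (Fin.succ_ne_zero (f' v)).symm]
      rw [hset, Finset.sum_union (Finset.disjoint_left.2
        (fun a ha hb => (Finset.mem_sdiff.1 ha).2 (Finset.mem_filter.1 hb).1))]
      have split : ∑ i ∈ (G.neighborFinset v ∩ S) ∩ T, x i
          + ∑ i ∈ (G.neighborFinset v ∩ S) \ T, x i = ∑ i ∈ G.neighborFinset v ∩ S, x i :=
        Finset.sum_inter_add_sum_sdiff _ _ _
      rw [← split]
      have h2 : ∑ i ∈ (G.neighborFinset v ∩ S) \ T, x i ≤ ∑ i ∈ S \ T, x i :=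
        Finset.sum_le_sum_of_subset_of_nonneg
          (Finset.sdiff_subset_sdiff Finset.inter_subset_right le_rfl)
          (fun i _ _ => hx i)
      have h3 : ∑ i ∈ (G.neighborFinset v ∩ S) ∩ T, x i
          ≤ ∑ i ∈ T.filter (fun i => f' i ≠ f' v), x i := by
        have : (G.neighborFinset v ∩ S) ∩ T = G.neighborFinset v ∩ T := by
          rw [Finset.inter_assoc, Finset.inter_comm S T, Finset.inter_eq_left.2 hTS]
        rw [this]
        exact hf' v hvT
      linarith
    · have hset : S.filter (fun i => (if i ∈ T then (f' i).succ else 0) ≠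
          (if v ∈ T then (f' v).succ else (0 : Fin (n + 2)))) = T := by
        ext i
        simp only [Finset.mem_filter, hvT, if_neg, ite_ne_right_iff]
        constructor
        · rintro ⟨-, h⟩
          by_contra hiT
          simp [hiT] at h
        · intro hiT
          exact ⟨hTS hiT, by simp [hiT, Fin.succ_ne_zero]⟩
      rw [hset]
      calc ∑ i ∈ G.neighborFinset v ∩ S, x i
          ≤ ∑ i ∈ G.neighborFinset u ∩ S, x i := hmax v hv
        _ = ∑ i ∈ T, x i := by rw [hT]

theorem stmt13 {V : Type*} [Fintype V] [DecidableEq V] (r : ℕ) (hr : 1 ≤ r) (p : ℝ) (hp : 1 ≤ p)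
    (G : SimpleGraph V) [DecidableRel G.Adj] (hG : G.CliqueFree (r + 1))
    (x : V → ℝ) (hx : ∀ v, 0 ≤ x v) :
    ∃ f : V → Fin r, ∀ v,
      ∑ i ∈ G.neighborFinset v, x i ≤ ∑ i ∈ Finset.univ.filter (fun i => f i ≠ f v), x i := by
  obtain ⟨n, rfl⟩ := Nat.exists_eq_succ_of_ne_zero (by omega : r ≠ 0)
  obtain ⟨f, hf⟩ := aux13 G x hx n Finset.univ (fun K _ hK => hG K hK)
  refine ⟨f, fun v => ?_⟩
  have := hf v (Finset.mem_univ v)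
  rwa [Finset.inter_univ] at this
end

section
/- Let 1 < p ≤ 2, 0 < γ < A < 1, R ≥ 0 and n ≥ 4R/γ. Let G be a graph of order n with λ^(p)(G) n^(2/p-1) > A n - R/n and δ(G) < (A - γ) n. If x = [x_i] is a nonnegative unit eigenvector to λ^(p)(G) (so ∑ x_i^p = 1 and the eigenequation λ^(p)(G) x_k^(p-1) = ∑_{i ∈ Γ(k)} x_i holds for all k), then σ := min{x_1^p, ..., x_n^p} satisfies σ ≤ (1 - γ/2)/n. -/
open Finset

open scoped Classical

private lemma aux_interp {a b c e t : ℝ} (ha : 0 < a) (hb : 0 < b) (hc : 0 < c)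
    (he : 0 < e) (h1 : c < e) (h2 : a * c < e ^ 2 * b)
    (ht1 : 1 / 2 ≤ t) (ht2 : t ≤ 1) :
    a ^ (1 - t) * c ^ t < e * b ^ (1 - t) := by
  rw [Real.rpow_def_of_pos ha, Real.rpow_def_of_pos hc, Real.rpow_def_of_pos hb,
    ← Real.exp_log he, ← Real.exp_add, ← Real.exp_add, Real.exp_lt_exp]
  have l1 : Real.log c < Real.log e := Real.log_lt_log hc h1
  have l2 : Real.log a + Real.log c < 2 * Real.log e + Real.log b := by
    have h := Real.log_lt_log (by positivity) h2
    rw [Real.log_mul ha.ne' hc.ne', Real.log_mul (by positivity) hb.ne',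
      Real.log_pow] at h
    push_cast at h
    linarith
  rcases eq_or_lt_of_le ht2 with rfl | ht2'
  · simpa using l1
  · nlinarith [mul_pos (by linarith : (0:ℝ) < 1 - t)
      (by linarith : (0:ℝ) < 2 * Real.log e + Real.log b - Real.log a - Real.log c),
      mul_nonneg (by linarith : (0:ℝ) ≤ 2 * t - 1)
      (by linarith : (0:ℝ) ≤ Real.log e - Real.log c)]

set_option maxHeartbeats 2000000 in
theorem stmt17 {n : ℕ} (G : SimpleGraph (Fin n)) [DecidableRel G.Adj]
    (p γ A R : ℝ) (hp1 : 1 < p) (hp2 : p ≤ 2)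
    (hγ : 0 < γ) (hγA : γ < A) (hA : A < 1) (hR : 0 ≤ R) (hn : 4 * R / γ ≤ (n : ℝ))
    (hlam : A * (n : ℝ) - R / (n : ℝ) < pSpec G p * (n : ℝ) ^ (2 / p - 1))
    (hdel : (G.minDegree : ℝ) < (A - γ) * (n : ℝ))
    (x : Fin n → ℝ) (hxnn : ∀ i, 0 ≤ x i) (hxnorm : (∑ i, |x i| ^ p) = 1)
    (hattain : (∑ i, ∑ j, if G.Adj i j then x i * x j else 0) = pSpec G p)
    (heig : ∀ k, pSpec G p * x k ^ (p - 1) = ∑ i ∈ G.neighborFinset k, x i) :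
    ∀ u : Fin n, (∀ i, x u ≤ x i) → x u ^ p ≤ (1 - γ / 2) / (n : ℝ) := by
  intro u hu
  by_contra hσ
  push_neg at hσ
  -- basic positivity facts
  have hp0 : (0:ℝ) < p := by linarith
  have hn0 : (0:ℝ) < (n:ℝ) := by
    have : n ≠ 0 := fun h => by subst h; exact u.elim0
    exact_mod_cast Nat.pos_of_ne_zero this
  have hn1 : (1:ℝ) ≤ (n:ℝ) := by
    have : 1 ≤ n := Nat.one_le_iff_ne_zero.2 (fun h => by subst h; exact u.elim0)
    exact_mod_cast this
  set t : ℝ := p⁻¹ with htdef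
  have ht1 : 1/2 ≤ t := by
    have := one_div_le_one_div_of_le hp0 hp2
    simpa [htdef, one_div] using this
  have ht2 : t < 1 := inv_lt_one_of_one_lt₀ hp1
  have hpt : p * t = 1 := mul_inv_cancel₀ hp0.ne'
  -- the abstract constants
  set a : ℝ := A - γ with hadef
  set b : ℝ := 1 - γ / 2 with hbdef
  set e : ℝ := A - γ / 4 with hedef
  set c : ℝ := γ / 2 + a * b with hcdef
  have ha : 0 < a := by simp [hadef]; linarith
  have hγ1 : γ < 1 := lt_trans hγA hA
  have hb : 0 < b := by simp [hbdef]; linarith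
  have he : 0 < e := by simp [hedef]; linarith
  have hc : 0 < c := by positivity
  have hce : c < e := by simp only [hcdef, hedef, hadef, hbdef]; nlinarith
  have hace : a * c < e ^ 2 * b := by
    simp only [hcdef, hedef, hadef, hbdef]
    nlinarith [mul_nonneg (mul_nonneg hγ.le (by linarith : (0:ℝ) ≤ A - γ))
      (by linarith : (0:ℝ) ≤ 1 - 3 * γ / 4),
      mul_pos (mul_pos hγ hγ) (by linarith : (0:ℝ) < 2 - γ)]
  -- min degree vertex
  haveI : Nonempty (Fin n) := ⟨u⟩
  obtain ⟨k, hk⟩ := G.exists_minimal_degree_vertex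
  set dk : ℝ := (G.degree k : ℝ) with hdkdef
  have hdk0 : 0 ≤ dk := by positivity
  have hdkan : dk < a * (n:ℝ) := by rw [hdkdef, ← hk]; exact hdel
  have hdkn : (G.degree k : ℕ) ≤ n := by
    have := G.degree_lt_card_verts k
    simpa [Fintype.card_fin] using this.le
  -- normalization without abs
  have hxnorm' : (∑ i, x i ^ p) = 1 := by
    rw [← hxnorm]; exact Finset.sum_congr rfl fun i _ => by rw [abs_of_nonneg (hxnn i)]
  set s : ℝ := x u ^ p with hsdef
  have hσ' : b / (n:ℝ) < s := hσ
  have hbn : 0 < b / (n:ℝ) := by positivity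
  have hs0 : 0 < s := lt_trans hbn hσ'
  have hxu0 : 0 < x u := by
    rcases (hxnn u).lt_or_eq with h | h
    · exact h
    · exfalso; rw [hsdef, ← h, Real.zero_rpow hp0.ne'] at hs0; exact lt_irrefl _ hs0
  -- each x i ^ p ≥ s
  have hsle : ∀ i, s ≤ x i ^ p := fun i => Real.rpow_le_rpow (hxnn u) (hu i) hp0.le
  -- sum over neighborhood
  set S : ℝ := ∑ i ∈ G.neighborFinset k, x i ^ p with hSdef
  have hS0 : 0 ≤ S := Finset.sum_nonneg fun i _ => Real.rpow_nonneg (hxnn i) p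
  set M : ℝ := 1 - ((n:ℝ) - dk) * s with hMdef
  have hSM : S ≤ M := by
    have hsplit : (∑ i ∈ Finset.univ \ G.neighborFinset k, x i ^ p) + S = 1 := by
      rw [hSdef, Finset.sum_sdiff (Finset.subset_univ _), hxnorm']
    have hcard : (Finset.univ \ G.neighborFinset k).card = n - G.degree k := by
      rw [Finset.card_sdiff_of_subset (Finset.subset_univ _), Finset.card_univ, Fintype.card_fin,
        G.card_neighborFinset_eq_degree]
    have hT : ((n:ℝ) - dk) * s ≤ ∑ i ∈ Finset.univ \ G.neighborFinset k, x i ^ p := by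
      have := Finset.card_nsmul_le_sum (Finset.univ \ G.neighborFinset k)
        (fun i => x i ^ p) s (fun i _ => hsle i)
      rw [hcard, nsmul_eq_mul] at this
      calc ((n:ℝ) - dk) * s = ((n - G.degree k : ℕ) : ℝ) * s := by
            rw [Nat.cast_sub hdkn, hdkdef]
        _ ≤ _ := this
    linarith
  have hM0 : 0 ≤ M := le_trans hS0 hSM
  have hMc : M ≤ c := by
    have h1 : (1 - a) * (n:ℝ) ≤ (n:ℝ) - dk := by linarith [hdkan]
    have h2 : (1 - a) * b ≤ ((n:ℝ) - dk) * s := by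
      calc (1 - a) * b = ((1 - a) * (n:ℝ)) * (b / (n:ℝ)) := by field_simp
        _ ≤ ((n:ℝ) - dk) * s := by
            apply mul_le_mul h1 hσ'.le hbn.le ?_
            have han : a * (n:ℝ) ≤ 1 * (n:ℝ) :=
              mul_le_mul_of_nonneg_right (by rw [hadef]; linarith) hn0.le
            linarith
    rw [hMdef, hcdef, hbdef] at *
    linarith [h2]
  -- positivity of the spectral radius
  have hAnR : e * (n:ℝ) ≤ A * (n:ℝ) - R / (n:ℝ) := by
    have hRn : R ≤ γ * (n:ℝ) / 4 := by
      rw [div_le_iff₀ hγ] at hn; linarith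
    have hRn' : R / (n:ℝ) ≤ R := by
      rw [div_le_iff₀ hn0]
      calc R = R * 1 := (mul_one R).symm
        _ ≤ R * (n:ℝ) := mul_le_mul_of_nonneg_left hn1 hR
    rw [hedef]; ring_nf; ring_nf at hRn hRn' ⊢; linarith
  have hen : 0 < e * (n:ℝ) := by positivity
  have hlampos : 0 < pSpec G p := by
    have hnp : 0 < (n:ℝ) ^ ((2:ℝ)/p - 1) := Real.rpow_pos_of_pos hn0 _
    have h : 0 < pSpec G p * (n:ℝ) ^ ((2:ℝ)/p - 1) :=
      lt_trans (lt_of_lt_of_le hen hAnR) hlam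
    by_contra hle
    push_neg at hle
    have := mul_nonpos_of_nonpos_of_nonneg hle hnp.le
    linarith
  -- Hölder
  have hH : (∑ i ∈ G.neighborFinset k, x i) ≤ dk ^ (1 - t) * S ^ t := by
    have := Real.inner_le_weight_mul_Lp_of_nonneg (G.neighborFinset k) hp1.le
      (fun _ => (1:ℝ)) x (fun _ => zero_le_one) hxnn
    simpa [htdef, hdkdef, G.card_neighborFinset_eq_degree, hSdef, mul_comm] using this
  -- key chain
  have hxup : 0 < x u ^ (p - 1) := Real.rpow_pos_of_pos hxu0 _
  have hchain : pSpec G p * x u ^ (p - 1) ≤ dk ^ (1 - t) * M ^ t := by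
    calc pSpec G p * x u ^ (p - 1) ≤ pSpec G p * x k ^ (p - 1) := by
          apply mul_le_mul_of_nonneg_left _ hlampos.le
          exact Real.rpow_le_rpow (hxnn u) (hu k) (by linarith)
      _ = ∑ i ∈ G.neighborFinset k, x i := heig k
      _ ≤ dk ^ (1 - t) * S ^ t := hH
      _ ≤ dk ^ (1 - t) * M ^ t := by
          apply mul_le_mul_of_nonneg_left _ (Real.rpow_nonneg hdk0 _)
          exact Real.rpow_le_rpow hS0 hSM (by positivity)
  -- powers of n
  set P : ℝ := (n:ℝ) ^ t with hPdef
  set Q : ℝ := (n:ℝ) ^ (1 - t) with hQdef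
  have hP0 : 0 < P := Real.rpow_pos_of_pos hn0 _
  have hQ0 : 0 < Q := Real.rpow_pos_of_pos hn0 _
  have hPQ : P * Q = (n:ℝ) := by
    rw [hPdef, hQdef, ← Real.rpow_add hn0]; simp
  have hQ2 : Q * (n:ℝ) ^ (2 * t - 1) = P := by
    rw [hQdef, hPdef, ← Real.rpow_add hn0]; ring_nf
  -- x u ^ (p-1) = s ^ (1-t)
  have hxus : x u ^ (p - 1) = s ^ (1 - t) := by
    rw [hsdef, ← Real.rpow_mul (hxnn u)]
    congr 1
    rw [mul_sub, mul_one, hpt]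
  -- lower bound for the left-hand side
  have hLHS : e * b ^ (1 - t) * P ≤ (A * (n:ℝ) - R / (n:ℝ)) * x u ^ (p - 1) := by
    have h1 : (b / (n:ℝ)) ^ (1 - t) ≤ x u ^ (p - 1) := by
      rw [hxus]
      exact Real.rpow_le_rpow hbn.le hσ'.le (by linarith)
    have h2 : (b / (n:ℝ)) ^ (1 - t) = b ^ (1 - t) / Q := by
      rw [hQdef]; exact Real.div_rpow hb.le hn0.le _
    calc e * b ^ (1 - t) * P = (e * (n:ℝ)) * (b ^ (1 - t) / Q) := by
          rw [← hPQ]; field_simp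
      _ ≤ (A * (n:ℝ) - R / (n:ℝ)) * x u ^ (p - 1) := by
          apply mul_le_mul hAnR (by rw [← h2]; exact h1) _ (le_trans hen.le hAnR)
          rw [← h2]
          positivity
  -- middle strict inequality
  have h2t : (2:ℝ) / p - 1 = 2 * t - 1 := by rw [div_eq_mul_inv, htdef]
  have hn2t : (0:ℝ) < (n:ℝ) ^ (2 * t - 1) := Real.rpow_pos_of_pos hn0 _
  have hmid : (A * (n:ℝ) - R / (n:ℝ)) * x u ^ (p - 1) <
      (dk ^ (1 - t) * M ^ t) * (n:ℝ) ^ (2 * t - 1) := by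
    have h1 : (A * (n:ℝ) - R / (n:ℝ)) * x u ^ (p - 1) <
        (pSpec G p * (n:ℝ) ^ (2 * t - 1)) * x u ^ (p - 1) := by
      apply mul_lt_mul_of_pos_right _ hxup
      rw [← h2t]; exact hlam
    have h2 : (pSpec G p * (n:ℝ) ^ (2 * t - 1)) * x u ^ (p - 1)
        = (pSpec G p * x u ^ (p - 1)) * (n:ℝ) ^ (2 * t - 1) := by ring
    have h3 : (pSpec G p * x u ^ (p - 1)) * (n:ℝ) ^ (2 * t - 1) ≤
        (dk ^ (1 - t) * M ^ t) * (n:ℝ) ^ (2 * t - 1) :=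
      mul_le_mul_of_nonneg_right hchain hn2t.le
    rw [h2] at h1
    exact lt_of_lt_of_le h1 h3
  -- upper bound for the right-hand side
  have hRHS : (dk ^ (1 - t) * M ^ t) * (n:ℝ) ^ (2 * t - 1) ≤ (a ^ (1 - t) * c ^ t) * P := by
    have h1 : dk ^ (1 - t) ≤ a ^ (1 - t) * Q := by
      rw [hQdef, ← Real.mul_rpow ha.le hn0.le]
      exact Real.rpow_le_rpow hdk0 hdkan.le (by linarith)
    have h2 : M ^ t ≤ c ^ t := Real.rpow_le_rpow hM0 hMc (by linarith)
    calc (dk ^ (1 - t) * M ^ t) * (n:ℝ) ^ (2 * t - 1)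
        ≤ ((a ^ (1 - t) * Q) * c ^ t) * (n:ℝ) ^ (2 * t - 1) := by
          apply mul_le_mul_of_nonneg_right _ hn2t.le
          exact mul_le_mul h1 h2 (Real.rpow_nonneg hM0 _)
            (by positivity)
      _ = (a ^ (1 - t) * c ^ t) * (Q * (n:ℝ) ^ (2 * t - 1)) := by ring
      _ = (a ^ (1 - t) * c ^ t) * P := by rw [hQ2]
  -- contradiction
  have hfinal : e * b ^ (1 - t) * P < (a ^ (1 - t) * c ^ t) * P :=
    lt_of_le_of_lt hLHS (lt_of_lt_of_le hmid hRHS)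
  have hcancel : e * b ^ (1 - t) < a ^ (1 - t) * c ^ t :=
    lt_of_mul_lt_mul_right hfinal hP0.le
  have := aux_interp ha hb hc he hce hace ht1 ht2.le
  linarith
end

section
/- Let p > 1, let G be a graph of order n, let x = [x_i] be a nonnegative unit eigenvector to λ = λ^(p)(G), and let u be a vertex with x_u = min{x_1,...,x_n}, σ = x_u^p. Then λ^(p)(G - u) ≥ λ (1 - 2σ) / (1 - σ)^(2/p). -/
open Finset

open scoped Classical

lemma pSpec_bddAbove {V : Type*} [Fintype V] (G : SimpleGraph V) (p : ℝ) (hp : 0 < p) :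
    BddAbove {y : ℝ | ∃ x : V → ℝ, (∑ i, |x i| ^ p) = 1 ∧
      y = ∑ i, ∑ j, if G.Adj i j then x i * x j else 0} := by
  refine ⟨(Fintype.card V : ℝ) * (Fintype.card V : ℝ), ?_⟩
  rintro y ⟨x, hx, rfl⟩
  have hb : ∀ i, |x i| ≤ 1 := by
    intro i
    by_contra h
    push_neg at h
    have h1 : (1:ℝ) < |x i| ^ p :=
      (Real.one_lt_rpow_iff (abs_nonneg _)).2 (Or.inl ⟨h, hp⟩)
    have h2 : |x i| ^ p ≤ ∑ j, |x j| ^ p :=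
      Finset.single_le_sum (fun j _ => Real.rpow_nonneg (abs_nonneg _) _) (mem_univ i)
    rw [hx] at h2
    linarith
  have hterm : ∀ i j : V, (if G.Adj i j then x i * x j else 0) ≤ 1 := by
    intro i j
    split_ifs
    · calc x i * x j ≤ |x i * x j| := le_abs_self _
        _ = |x i| * |x j| := abs_mul _ _
        _ ≤ 1 * 1 := by
            exact mul_le_mul (hb i) (hb j) (abs_nonneg _) zero_le_one
        _ = 1 := one_mul 1
    · norm_num
  calc (∑ i, ∑ j, if G.Adj i j then x i * x j else 0)
      ≤ ∑ i : V, ∑ j : V, (1:ℝ) := by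
        refine Finset.sum_le_sum fun i _ => Finset.sum_le_sum fun j _ => hterm i j
    _ = (Fintype.card V : ℝ) * (Fintype.card V : ℝ) := by
        simp [Finset.sum_const, mul_comm]

theorem stmt18 {V : Type*} [Fintype V] [DecidableEq V] (G : SimpleGraph V)
    (p : ℝ) (hp : 1 < p)
    (x : V → ℝ) (hxnn : ∀ i, 0 ≤ x i) (hxnorm : (∑ i, |x i| ^ p) = 1)
    (hattain : (∑ i, ∑ j, if G.Adj i j then x i * x j else 0) = pSpec G p)
    (heig : ∀ k, pSpec G p * x k ^ (p - 1) = ∑ i ∈ Finset.univ.filter (G.Adj k ·), x i)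
    (u : V) (hu : ∀ i, x u ≤ x i) :
    pSpec G p * (1 - 2 * x u ^ p) / (1 - x u ^ p) ^ (2 / p) ≤
      pSpec (G.induce ↑(Finset.univ.erase u)) p := by
  have hp0 : (0:ℝ) < p := by linarith
  have hpne : p ≠ 0 := ne_of_gt hp0
  set lam := pSpec G p with hlam
  set σ := x u ^ p with hσ
  set E : Finset V := Finset.univ.erase u with hE
  -- rewrite the norm without abs
  have hxnorm' : (∑ i, x i ^ p) = 1 := by
    rw [← hxnorm]
    exact Finset.sum_congr rfl fun i _ => by rw [abs_of_nonneg (hxnn i)]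
  -- the subtype vertex set
  by_cases hne : Nonempty ((↑E : Set V))
  · -- there is another vertex
    obtain ⟨⟨v, hv⟩⟩ := hne
    have hvE : v ∈ E := hv
    have hvu : v ≠ u := (Finset.mem_erase.1 hvE).1
    -- σ ≤ 1/2
    have hσv : σ ≤ x v ^ p := Real.rpow_le_rpow (hxnn u) (hu v) (le_of_lt hp0)
    have hsum2 : σ + x v ^ p ≤ 1 := by
      have : ∑ i ∈ ({u, v} : Finset V), x i ^ p ≤ ∑ i, x i ^ p := by
        refine Finset.sum_le_sum_of_subset_of_nonneg (Finset.subset_univ _)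
          (fun i _ _ => Real.rpow_nonneg (hxnn i) _)
      rw [hxnorm'] at this
      rwa [Finset.sum_pair (Ne.symm hvu)] at this
    have hσhalf : σ ≤ 1/2 := by linarith
    have h1σ : (0:ℝ) < 1 - σ := by linarith
    set c : ℝ := (1 - σ) ^ (1/p) with hc
    have hcpos : 0 < c := Real.rpow_pos_of_pos h1σ _
    have hcp : c ^ p = 1 - σ := by
      rw [hc, ← Real.rpow_mul (le_of_lt h1σ)]
      rw [one_div_mul_cancel hpne, Real.rpow_one]
    have hcc : c * c = (1 - σ) ^ (2/p) := by
      rw [hc, ← Real.rpow_add h1σ]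
      ring_nf
    -- the quadratic form function
    set F : V → V → ℝ := fun i j => if G.Adj i j then x i * x j else 0 with hF
    have hFuu : F u u = 0 := by simp [hF]
    -- row sums at u
    have hrowu : ∑ j, F u j = lam * σ := by
      have h1 : ∑ j, F u j = x u * ∑ j ∈ Finset.univ.filter (G.Adj u ·), x j := by
        rw [Finset.sum_filter, Finset.mul_sum]
        exact Finset.sum_congr rfl fun j _ => by
          simp only [hF]; split_ifs <;> ring
      rw [h1, ← heig u]
      rcases eq_or_lt_of_le (hxnn u) with h0 | h0
      · have : σ = 0 := by rw [hσ, ← h0, Real.zero_rpow hpne]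
        rw [← h0, this]; ring
      · have : x u * x u ^ (p - 1) = σ := by
          rw [hσ]
          nth_rewrite 1 [← Real.rpow_one (x u)]
          rw [← Real.rpow_add h0]; ring_nf
        calc x u * (lam * x u ^ (p-1)) = lam * (x u * x u ^ (p-1)) := by ring
          _ = lam * σ := by rw [this]
    have hcolu : ∑ i, F i u = lam * σ := by
      rw [← hrowu]
      exact Finset.sum_congr rfl fun i _ => by
        simp only [hF]
        rw [SimpleGraph.adj_comm]
        split_ifs <;> ring
    -- split the total sum
    have hsplit : lam = F u u + (∑ j ∈ E, F u j) +
        ((∑ i ∈ E, F i u) + ∑ i ∈ E, ∑ j ∈ E, F i j) := by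
      rw [← hattain]
      have h1 : ∀ i, ∑ j, F i j = F i u + ∑ j ∈ E, F i j :=
        fun i => (Finset.add_sum_erase univ (F i) (mem_univ u)).symm
      calc (∑ i, ∑ j, F i j) = ∑ i, (F i u + ∑ j ∈ E, F i j) :=
            Finset.sum_congr rfl fun i _ => h1 i
        _ = (∑ i, F i u) + ∑ i, ∑ j ∈ E, F i j := Finset.sum_add_distrib
        _ = (F u u + ∑ i ∈ E, F i u) +
            ((∑ j ∈ E, F u j) + ∑ i ∈ E, ∑ j ∈ E, F i j) := by
            rw [← Finset.add_sum_erase univ (fun i => F i u) (mem_univ u),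
              ← Finset.add_sum_erase univ (fun i => ∑ j ∈ E, F i j) (mem_univ u)]
        _ = _ := by ring
    have hrow' : ∑ j ∈ E, F u j = lam * σ := by
      have := Finset.add_sum_erase univ (F u) (mem_univ u)
      rw [hFuu, zero_add] at this
      rw [this, hrowu]
    have hcol' : ∑ i ∈ E, F i u = lam * σ := by
      have h : F u u + ∑ i ∈ E, F i u = ∑ i, F i u :=
        Finset.add_sum_erase univ (fun i => F i u) (mem_univ u)
      rw [hFuu, zero_add] at h
      rw [h, hcolu]
    have hSsub : ∑ i ∈ E, ∑ j ∈ E, F i j = lam * (1 - 2 * σ) := by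
      rw [hrow', hcol', hFuu] at hsplit
      linarith
    -- restricted norm
    have hnormE : ∑ i ∈ E, x i ^ p = 1 - σ := by
      have h : x u ^ p + ∑ i ∈ E, x i ^ p = ∑ i, x i ^ p :=
        Finset.add_sum_erase univ (fun i => x i ^ p) (mem_univ u)
      rw [hxnorm'] at h
      rw [hσ]; linarith [h]
    -- the candidate vector
    set y : (↑E : Set V) → ℝ := fun i => x i.val / c with hy
    have hEiff : ∀ w : V, w ∈ E ↔ w ∈ (↑E : Set V) := fun w => (Finset.mem_coe).symm
    have hsubsum : ∀ f : V → ℝ, (∑ i : (↑E : Set V), f i.val) = ∑ i ∈ E, f i :=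
      fun f => (Finset.sum_subtype E hEiff f).symm
    -- norm of y
    have hynorm : (∑ i, |y i| ^ p) = 1 := by
      have h1 : (∑ i, |y i| ^ p) = ∑ i ∈ E, |x i / c| ^ p :=
        hsubsum (fun w => |x w / c| ^ p)
      rw [h1]
      have h2 : ∀ i ∈ E, |x i / c| ^ p = x i ^ p / c ^ p := by
        intro i _
        rw [abs_of_nonneg (div_nonneg (hxnn i) (le_of_lt hcpos)),
          Real.div_rpow (hxnn i) (le_of_lt hcpos)]
      rw [Finset.sum_congr rfl h2, ← Finset.sum_div, hnormE, hcp,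
        div_self (ne_of_gt h1σ)]
    -- value of the form at y
    have hadj : ∀ i j : (↑E : Set V), (G.induce ↑E).Adj i j ↔ G.Adj i.val j.val :=
      fun i j => SimpleGraph.comap_adj
    have hyval : (∑ i, ∑ j, if (G.induce ↑E).Adj i j then y i * y j else 0)
        = lam * (1 - 2 * σ) / (1 - σ) ^ (2/p) := by
      have hconv : ∀ i j : (↑E : Set V),
          (if (G.induce ↑E).Adj i j then y i * y j else 0)
            = F i.val j.val / (c * c) := by
        intro i j
        by_cases h : G.Adj i.val j.val
        · rw [if_pos ((hadj i j).2 h)]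
          simp only [hF, if_pos h, hy]
          rw [div_mul_div_comm]
        · rw [if_neg (fun hh => h ((hadj i j).1 hh))]
          simp only [hF, if_neg h, zero_div]
      calc (∑ i, ∑ j, if (G.induce ↑E).Adj i j then y i * y j else 0)
          = ∑ i : (↑E : Set V), (∑ j : (↑E : Set V), F i.val j.val) / (c * c) := by
            refine Finset.sum_congr rfl fun i _ => ?_
            rw [Finset.sum_div]
            exact Finset.sum_congr rfl fun j _ => hconv i j
        _ = ∑ i : (↑E : Set V), (∑ j ∈ E, F i.val j) / (c * c) := by
            refine Finset.sum_congr rfl fun i _ => ?_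
            rw [hsubsum (fun j => F i.val j)]
        _ = ∑ i ∈ E, (∑ j ∈ E, F i j) / (c * c) :=
            hsubsum (fun w => (∑ j ∈ E, F w j) / (c * c))
        _ = (∑ i ∈ E, ∑ j ∈ E, F i j) / (c * c) := (Finset.sum_div _ _ _).symm
        _ = lam * (1 - 2 * σ) / (1 - σ) ^ (2/p) := by rw [hSsub, hcc]
    -- conclude
    refine le_csSup (pSpec_bddAbove _ p hp0) ?_
    exact ⟨y, hynorm, hyval.symm⟩
  · -- V = {u}
    have hall : ∀ w : V, w = u := by
      intro w
      by_contra h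
      exact hne ⟨⟨w, Finset.mem_coe.2 (Finset.mem_erase.2 ⟨h, mem_univ w⟩)⟩⟩
    have huniv : (univ : Finset V) = {u} := by
      apply Finset.eq_singleton_iff_unique_mem.2
      exact ⟨mem_univ u, fun w _ => hall w⟩
    have hσ1 : σ = 1 := by
      rw [hσ, ← hxnorm', huniv, Finset.sum_singleton]
    have hlhs : lam * (1 - 2 * σ) / (1 - σ) ^ (2/p) = 0 := by
      rw [hσ1]
      simp [Real.zero_rpow (by positivity : 2/p ≠ 0)]
    rw [hlhs]
    have hempty : {y : ℝ | ∃ z : (↑E : Set V) → ℝ, (∑ i, |z i| ^ p) = 1 ∧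
        y = ∑ i, ∑ j, if (G.induce ↑E).Adj i j then z i * z j else 0} = ∅ := by
      ext y
      simp only [Set.mem_setOf_eq, Set.mem_empty_iff_false, iff_false]
      rintro ⟨z, hz, -⟩
      have : IsEmpty ((↑E : Set V)) := by
        rw [not_nonempty_iff] at hne; exact hne
      rw [Finset.sum_of_isEmpty] at hz
      norm_num at hz
    rw [pSpec]
    refine le_of_eq (Eq.trans Real.sSup_empty.symm ?_)
    congr 1
    convert hempty.symm
end
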